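/- arXiv:1507.02414 — 5 statements merged into one kernel-verified Lean document; each statement's English description precedes it below -/
import Mathlib

section
/- Let R = ⟨G,(s₀,t₀),C⟩ be a scenario on a path with s₀ ≤ left(R) ≤ right(R) ≤ t₀. Suppose (s,t), (s',t') ∈ C with t' ≤ t < s ≤ s'. Then every ride that is feasible for ⟨G,(s₀,t₀),C \ {(s,t)}⟩ is feasible for R; in particular removing (s,t) does not change the set of feasible rides. -/
namespace RideSharing

/-- A ride in a graph with adjacency `adj`: a nonempty sequence of nodes where
consecutive nodes are adjacent. -/
def IsRide (adj : ℕ → ℕ → Prop) (π : List ℕ) : Prop :=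
  π ≠ [] ∧ π.Chain' adj

/-- The cost of a ride: sum of the weights of traversed edges. -/
def cost (w : ℕ → ℕ → ℚ) : List ℕ → ℚ
  | [] => 0
  | [_] => 0
  | a :: b :: rest => w a b + cost w (b :: rest)

/-- A ride satisfies a request `(s,t)` if `s` occurs at a time step weakly before
an occurrence of `t`. -/
def Satisfies (π : List ℕ) (s t : ℕ) : Prop :=
  ∃ i j : ℕ, i ≤ j ∧ π[i]? = some s ∧ π[j]? = some t

/-- `Pre π' π` : `π'` is obtained from `π` by (repeatedly) removing a contiguous
subsequence of nodes (the relation `π' ⪯ π` of the paper, stated with 0-based indices: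
`π[1,i] , π[i',len]` becomes `π.take (i+1) ++ π.drop i'`). -/
inductive Pre : List ℕ → List ℕ → Prop
  | refl (π : List ℕ) : Pre π π
  | step (π' π : List ℕ) (i i' : ℕ) :
      i < i' → i' < π.length →
      (π[i + 1]? = π[i']? ∨ π[i]? = π[i' - 1]?) →
      Pre π' (π.take (i + 1) ++ π.drop i') → Pre π' π

/-- A ride-sharing scenario. -/
structure Scenario where
  adj : ℕ → ℕ → Prop
  w : ℕ → ℕ → ℚ
  s0 : ℕ
  t0 : ℕ
  C : Finset (ℕ × ℕ)

def Feasible (R : Scenario) (π : List ℕ) : Prop :=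
  IsRide R.adj π ∧ π.head? = some R.s0 ∧ π.getLast? = some R.t0 ∧
    ∀ r ∈ R.C, Satisfies π r.1 r.2

def Optimal (R : Scenario) (π : List ℕ) : Prop :=
  Feasible R π ∧ ∀ π', Feasible R π' → cost R.w π ≤ cost R.w π'

/-- The set `V_C` of endpoints of requests. -/
def VC (C : Finset (ℕ × ℕ)) : Finset ℕ := C.image Prod.fst ∪ C.image Prod.snd

/-- The path graph on `{1,…,n}`. -/
def pathAdj (n : ℕ) (a b : ℕ) : Prop :=
  (b = a + 1 ∨ a = b + 1) ∧ 1 ≤ a ∧ a ≤ n ∧ 1 ≤ b ∧ b ≤ n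

/-- The monotone segment of the path from `x` to `y`. -/
def seg (x y : ℕ) : List ℕ :=
  if x ≤ y then (List.range (y - x + 1)).map (fun k => x + k)
  else (List.range (x - y + 1)).map (fun k => x - k)

/-- The ride through a list of waypoints, concatenating monotone segments. -/
def rideThrough : List ℕ → List ℕ
  | [] => []
  | [x] => [x]
  | x :: y :: rest => seg x y ++ (rideThrough (y :: rest)).tail

/-- Concatenation of rides (`π ↦ π'`), inserting the monotone connecting segment
if the endpoints differ. -/
def rconcat (a b : List ℕ) : List ℕ :=
  a ++ (seg (a.getLastD 0) (b.headD 0)).tail ++ b.tail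



/-- Discrete intermediate value theorem for walks on the path graph. -/
lemma ivt (nn : ℕ) (π : List ℕ) (hch : π.Chain' (pathAdj nn)) (c : ℕ) :
    ∀ (d i j : ℕ), j - i = d → ∀ (hij : i ≤ j) (hj : j < π.length),
      c ≤ π[i]'(Nat.lt_of_le_of_lt hij hj) → π[j]'hj ≤ c →
      ∃ k, i ≤ k ∧ k ≤ j ∧ ∃ hk : k < π.length, π[k]'hk = c := by
  intro d
  induction d with
  | zero =>
    intro i j hd hij hj hci hjc
    have : i = j := by omega
    subst this
    exact ⟨i, le_refl _, le_refl _, hj, le_antisymm hjc hci⟩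
  | succ d ih =>
    intro i j hd hij hj hci hjc
    have hi : i < π.length := Nat.lt_of_le_of_lt hij hj
    by_cases hc : π[i]'hi ≤ c
    · exact ⟨i, le_refl _, hij, hi, le_antisymm hc hci⟩
    · push_neg at hc
      have hij' : i < j := by
        rcases Nat.lt_or_ge i j with h | h
        · exact h
        · have : i = j := le_antisymm hij h
          subst this; omega
      have hstep : pathAdj nn (π[i]'hi) (π[i+1]'(by omega)) := by
        have := List.isChain_iff_getElem.mp hch i (by omega)
        simpa [List.get_eq_getElem] using this
      have hnext : c ≤ π[i+1]'(by omega) := by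
        rcases hstep.1 with h | h <;> omega
      obtain ⟨k, hk1, hk2, hk3⟩ := ih (i+1) j (by omega) (by omega) hj hnext hjc
      exact ⟨k, by omega, hk2, hk3⟩

/-- on a path with `s₀ ≤ left(R) ≤ right(R) ≤ t₀`, a request `(s,t)`
dominated by `(s',t')` (i.e. `t' ≤ t < s ≤ s'`) can be removed without changing
the set of feasible rides. -/
theorem remove_dominated_request (n : ℕ) (w : ℕ → ℕ → ℚ)
    (s0 t0 : ℕ) (C : Finset (ℕ × ℕ)) (hst : s0 ≤ t0) (h1 : 1 ≤ s0) (h2 : t0 ≤ n)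
    (hC : ∀ v ∈ VC C, s0 ≤ v ∧ v ≤ t0)
    (s t s' t' : ℕ) (hmem : (s, t) ∈ C) (hmem' : (s', t') ∈ C.erase (s, t))
    (hdom : t' ≤ t ∧ t < s ∧ s ≤ s') :
    ∀ π, Feasible ⟨pathAdj n, w, s0, t0, C⟩ π ↔
      Feasible ⟨pathAdj n, w, s0, t0, C.erase (s, t)⟩ π := by
  intro π
  constructor
  · rintro ⟨hr, hh, hl, hsat⟩
    exact ⟨hr, hh, hl, fun r hr' => hsat r (Finset.mem_of_mem_erase hr')⟩
  · rintro ⟨hr, hh, hl, hsat⟩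
    refine ⟨hr, hh, hl, fun r hrC => ?_⟩
    by_cases hcase : r = (s, t)
    · subst hcase
      obtain ⟨hd1, hd2, hd3⟩ := hdom
      obtain ⟨i', j', hij', hgi, hgj⟩ := hsat (s', t') hmem'
      rw [List.getElem?_eq_some_iff] at hgi hgj
      obtain ⟨hi'len, hi'val⟩ := hgi
      obtain ⟨hj'len, hj'val⟩ := hgj
      -- find occurrence of s between i' and j'
      obtain ⟨i, hi1, hi2, hilen, hival⟩ :=
        ivt n π hr.2 s (j' - i') i' j' rfl hij' hj'len (by rw [hi'val]; omega)
          (by rw [hj'val]; omega)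
      -- find occurrence of t between i and j'
      obtain ⟨j, hj1, hj2, hjlen, hjval⟩ :=
        ivt n π hr.2 t (j' - i) i j' rfl hi2 hj'len (by rw [hival]; omega)
          (by rw [hj'val]; omega)
      exact ⟨i, j, hj1, by rw [List.getElem?_eq_getElem hilen, hival],
        by rw [List.getElem?_eq_getElem hjlen, hjval]⟩
    · exact hsat r (Finset.mem_erase.mpr ⟨hcase, hrC⟩)


end RideSharing
end

section
/- Let R = ⟨G,(s₀,t₀),C⟩ be a scenario on a path with s₀ ≤ left(R) ≤ right(R) ≤ t₀, and let (s,t), (s',t') ∈ C with t < s, t' < s' and t' ≤ t ≤ s' ≤ s. Then every optimal ride for the scenario with request set C' = C \ {(s,t),(s',t')} ∪ {(s,t')} is also an optimal ride for R. -/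
namespace RideSharing

/-! ### basic helpers -/

def stepRel (a b : ℕ) : Prop := b = a + 1 ∨ a = b + 1

/-- glueing two walks sharing an endpoint -/
def glue (A B : List ℕ) : List ℕ := A ++ B.tail

def Compat (A B : List ℕ) : Prop := ∃ x, A.getLast? = some x ∧ B.head? = some x

lemma Compat.neA {A B : List ℕ} (h : Compat A B) : A ≠ [] := by
  rcases h with ⟨x, h1, -⟩; rintro rfl; simp at h1

lemma Compat.neB {A B : List ℕ} (h : Compat A B) : B ≠ [] := by
  rcases h with ⟨x, -, h2⟩; rintro rfl; simp at h2

lemma head?_glue {A : List ℕ} (B : List ℕ) (h : A ≠ []) : (glue A B).head? = A.head? := by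
  cases A with
  | nil => simp at h
  | cons a l => simp [glue]

lemma getLast?_glue {A B : List ℕ} (h : Compat A B) : (glue A B).getLast? = B.getLast? := by
  rcases h with ⟨x, h1, h2⟩
  cases B with
  | nil => simp at h2
  | cons b bt =>
    simp at h2; subst h2
    cases bt with
    | nil => simpa [glue] using h1
    | cons c ct =>
      simp only [glue, List.tail_cons]
      rw [List.getLast?_append]
      exact Option.or_of_isSome (by rw [List.getLast?_isSome]; simp)

lemma chain'_glue {R : ℕ → ℕ → Prop} {A B : List ℕ} (h : Compat A B)
    (hA : A.Chain' R) (hB : B.Chain' R) : (glue A B).Chain' R := by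
  rcases h with ⟨x, h1, h2⟩
  cases B with
  | nil => simp at h2
  | cons b bt =>
    simp at h2; subst h2
    refine List.IsChain.append hA (hB.tail) ?_
    intro a ha c hc
    rw [h1] at ha; simp at ha; subst ha
    simp only [List.tail_cons] at hc
    exact (List.isChain_cons.mp hB).1 c hc

lemma cost_cons' (w : ℕ → ℕ → ℚ) {l : List ℕ} {b : ℕ} (a : ℕ) (hb : l.head? = some b) :
    cost w (a :: l) = w a b + cost w l := by
  cases l with
  | nil => simp at hb
  | cons c ct => simp at hb; subst hb; rfl

lemma cost_glue (w : ℕ → ℕ → ℚ) {A B : List ℕ} (h : Compat A B) :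
    cost w (glue A B) = cost w A + cost w B := by
  rcases h with ⟨x, h1, h2⟩
  induction A with
  | nil => simp at h1
  | cons a l ih =>
    cases l with
    | nil =>
      simp at h1; subst h1
      cases B with
      | nil => simp at h2
      | cons b bt => simp at h2; subst h2; simp [glue, cost]
    | cons a' l' =>
      have h1' : (a' :: l').getLast? = some x := by
        rw [← h1]; exact (List.getLast?_cons_cons ..).symm
      have : glue (a :: a' :: l') B = a :: glue (a' :: l') B := by simp [glue]
      rw [this, cost_cons' w a (show (glue (a' :: l') B).head? = some a' by simp [glue])]
      rw [ih h1', cost]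
      ring


lemma lt_length_of_getElem? {l : List ℕ} {i : ℕ} {x : ℕ} (h : l[i]? = some x) : i < l.length := by
  by_contra hc
  rw [List.getElem?_eq_none (by omega)] at h; simp at h

lemma getElem?_append_lt {A B : List ℕ} {k : ℕ} (h : k < A.length) :
    (A ++ B)[k]? = A[k]? := by
  rw [List.getElem?_append, if_pos h]

lemma mem_of_elem? {l : List ℕ} {x : ℕ} {k : ℕ} (h : l[k]? = some x) : x ∈ l :=
  List.mem_iff_getElem?.mpr ⟨k, h⟩

lemma sat_mems {l : List ℕ} {u v : ℕ} (h : Satisfies l u v) : u ∈ l ∧ v ∈ l := by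
  rcases h with ⟨i, j, -, hi, hj⟩
  exact ⟨mem_of_elem? hi, mem_of_elem? hj⟩

lemma glue_getElem? {A B : List ℕ} (h : Compat A B) (k : ℕ) :
    (glue A B)[A.length - 1 + k]? = B[k]? := by
  rcases h with ⟨x, h1, h2⟩
  have hA : A ≠ [] := by rintro rfl; simp at h1
  have hlen : 1 ≤ A.length := List.length_pos_iff.mpr hA
  cases B with
  | nil => simp at h2
  | cons b bt =>
    simp at h2; subst h2
    cases k with
    | zero =>
      have : A.length - 1 + 0 < A.length := by omega
      rw [show glue A (b :: bt) = A ++ bt by rfl, getElem?_append_lt this]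
      rw [List.getLast?_eq_getElem?] at h1
      simpa using h1
    | succ k' =>
      have : A.length - 1 + (k' + 1) = A.length + k' := by omega
      rw [show glue A (b :: bt) = A ++ bt by rfl, this,
        List.getElem?_append_right (by omega)]
      simp

lemma sat_glue_left {A B : List ℕ} {u v : ℕ} (h : Satisfies A u v) : Satisfies (glue A B) u v := by
  rcases h with ⟨i, j, hij, hi, hj⟩
  refine ⟨i, j, hij, ?_, ?_⟩
  · rw [glue, getElem?_append_lt (lt_length_of_getElem? hi)]; exact hi
  · rw [glue, getElem?_append_lt (lt_length_of_getElem? hj)]; exact hj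

lemma sat_glue_right {A B : List ℕ} {u v : ℕ} (hc : Compat A B) (h : Satisfies B u v) :
    Satisfies (glue A B) u v := by
  rcases h with ⟨i, j, hij, hi, hj⟩
  exact ⟨A.length - 1 + i, A.length - 1 + j, by omega,
    by rw [glue_getElem? hc]; exact hi, by rw [glue_getElem? hc]; exact hj⟩

lemma sat_glue_mem {A B : List ℕ} {u v : ℕ} (hc : Compat A B) (hu : u ∈ A) (hv : v ∈ B) :
    Satisfies (glue A B) u v := by
  rcases List.mem_iff_getElem?.mp hu with ⟨i, hi⟩
  rcases List.mem_iff_getElem?.mp hv with ⟨j, hj⟩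
  have hilt := lt_length_of_getElem? hi
  refine ⟨i, A.length - 1 + j, by omega, ?_, by rw [glue_getElem? hc]; exact hj⟩
  rw [glue, getElem?_append_lt hilt]; exact hi

lemma mem_glue_left {A B : List ℕ} {x : ℕ} (h : x ∈ A) : x ∈ glue A B :=
  List.mem_append_left _ h

lemma mem_glue_right {A B : List ℕ} {x : ℕ} (hc : Compat A B) (h : x ∈ B) : x ∈ glue A B := by
  rcases List.mem_iff_getElem?.mp h with ⟨j, hj⟩
  exact mem_of_elem? (by rw [glue_getElem? hc]; exact hj)

lemma mem_glue_cases {A B : List ℕ} {x : ℕ} (h : x ∈ glue A B) : x ∈ A ∨ x ∈ B := by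
  rcases List.mem_append.mp h with h' | h'
  · exact Or.inl h'
  · exact Or.inr (List.mem_of_mem_tail h')

lemma sat_glue_cases {A B : List ℕ} {u v : ℕ} (hc : Compat A B) (h : Satisfies (glue A B) u v) :
    Satisfies A u v ∨ Satisfies B u v ∨ (u ∈ A ∧ v ∈ B) := by
  rcases hc with ⟨x, h1, h2⟩
  have hA : A ≠ [] := by rintro rfl; simp at h1
  have hlen : 1 ≤ A.length := List.length_pos_iff.mpr hA
  cases B with
  | nil => simp at h2
  | cons b bt =>
    simp at h2; subst h2
    rcases h with ⟨i, j, hij, hi, hj⟩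
    rw [show glue A (b :: bt) = A ++ bt from rfl] at hi hj
    by_cases hjA : j < A.length
    · left
      exact ⟨i, j, hij, by rwa [getElem?_append_lt (by omega)] at hi,
        by rwa [getElem?_append_lt hjA] at hj⟩
    · push_neg at hjA
      have hj' : bt[j - A.length]? = some v := by
        rwa [List.getElem?_append_right hjA] at hj
      have hvB : v ∈ (b :: bt) := List.mem_cons_of_mem _ (mem_of_elem? hj')
      by_cases hiA : i < A.length
      · right; right
        exact ⟨mem_of_elem? (show A[i]? = some u by rwa [getElem?_append_lt hiA] at hi), hvB⟩
      · push_neg at hiA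
        have hi' : bt[i - A.length]? = some u := by
          rwa [List.getElem?_append_right hiA] at hi
        right; left
        exact ⟨i - A.length + 1, j - A.length + 1, by omega, by simpa using hi',
          by simpa using hj'⟩

lemma glue_take_drop {l : List ℕ} {i : ℕ} (h : i < l.length) :
    glue (l.take (i+1)) (l.drop i) = l := by
  rw [glue, List.tail_drop, List.take_append_drop]


/-- the slice `l[i..j]`, inclusive on both ends -/
def SL (l : List ℕ) (i j : ℕ) : List ℕ := (l.drop i).take (j - i + 1)

lemma SL_getElem? (l : List ℕ) {i j : ℕ} (k : ℕ) (hk : k ≤ j - i) :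
    (SL l i j)[k]? = l[i + k]? := by
  rw [SL, List.getElem?_take, if_pos (by omega), List.getElem?_drop]

lemma head?_eq_getElem?' (l : List ℕ) : l.head? = l[0]? := by cases l <;> simp

lemma SL_head? (l : List ℕ) {i j : ℕ} (hij : i ≤ j) : (SL l i j).head? = l[i]? := by
  rw [head?_eq_getElem?', SL_getElem? l 0 (by omega), Nat.add_zero]

lemma SL_getLast? (l : List ℕ) {i j : ℕ} (hij : i ≤ j) (hj : j < l.length) :
    (SL l i j).getLast? = l[j]? := by
  have hlen : (SL l i j).length = j - i + 1 := by
    rw [SL, List.length_take, List.length_drop]; omega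
  rw [List.getLast?_eq_getElem?, hlen]
  have h2 := SL_getElem? l (j := j) (i := i) (j - i) (le_refl _)
  rw [show j - i + 1 - 1 = j - i by omega, h2, show i + (j - i) = j by omega]

lemma SL_chain' {R : ℕ → ℕ → Prop} {l : List ℕ} (h : l.Chain' R) (i j : ℕ) :
    (SL l i j).Chain' R := (h.drop i).take _

lemma SL_mem {l : List ℕ} {i j x : ℕ} (hij : i ≤ j) (h : x ∈ SL l i j) :
    ∃ q, i ≤ q ∧ q ≤ j ∧ l[q]? = some x := by
  rcases List.mem_iff_getElem?.mp h with ⟨k, hk⟩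
  have hk' : k < j - i + 1 := by
    have := lt_length_of_getElem? hk
    rw [SL, List.length_take] at this; omega
  rw [SL_getElem? l k (by omega)] at hk
  exact ⟨i + k, by omega, by omega, hk⟩

lemma SL_mem_of {l : List ℕ} {i j q : ℕ} {x : ℕ} (hiq : i ≤ q) (hqj : q ≤ j)
    (h : l[q]? = some x) : x ∈ SL l i j := by
  have hk : q - i ≤ j - i := by omega
  apply mem_of_elem? (k := q - i)
  rw [SL_getElem? l (q - i) hk, show i + (q-i) = q by omega]
  exact h

lemma exists_min_list : ∀ (l : List ℕ), l ≠ [] → ∃ m ∈ l, ∀ x ∈ l, m ≤ x := by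
  intro l
  induction l with
  | nil => simp
  | cons a ll ih =>
    intro _
    rcases eq_or_ne ll [] with rfl | hne
    · exact ⟨a, by simp, by simp⟩
    · rcases ih hne with ⟨m, hm, hmin⟩
      rcases le_total a m with h | h
      · refine ⟨a, by simp, ?_⟩
        intro x hx
        rcases List.mem_cons.mp hx with rfl | hx
        · exact le_rfl
        · exact le_trans h (hmin x hx)
      · refine ⟨m, List.mem_cons_of_mem _ hm, ?_⟩
        intro x hx
        rcases List.mem_cons.mp hx with rfl | hx
        · exact h
        · exact hmin x hx

/-- discrete intermediate value theorem for walks -/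
lemma ivt_s6 {l : List ℕ} (hc : l.Chain' stepRel) :
    ∀ {x y c : ℕ}, l.head? = some x → l.getLast? = some y →
      min x y ≤ c → c ≤ max x y → c ∈ l := by
  induction l with
  | nil => intro x y c h; simp at h
  | cons a ll ih =>
    intro x y c hh hl h1 h2
    have hax : a = x := by simpa using hh
    subst hax
    cases ll with
    | nil =>
      have hay : a = y := by simpa using hl
      subst hay
      have : c = a := by omega
      simp [this]
    | cons b lt =>
      have hstep : stepRel a b := (List.isChain_cons_cons.mp hc).1
      rcases eq_or_ne c a with rfl | hne
      · simp
      · have hl' : (b :: lt).getLast? = some y := by rwa [List.getLast?_cons_cons] at hl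
        refine List.mem_cons_of_mem _ (ih (List.isChain_cons_cons.mp hc).2 rfl hl' ?_ ?_)
        · rcases hstep with h' | h' <;> subst h' <;> omega
        · rcases hstep with h' | h' <;> subst h' <;> omega

/-- all nodes of a ride on the path lie in `[1,n]` -/
lemma ride_bounds {n : ℕ} : ∀ {l : List ℕ}, l.Chain' (pathAdj n) → 2 ≤ l.length →
    ∀ x ∈ l, 1 ≤ x ∧ x ≤ n := by
  intro l
  induction l with
  | nil => simp
  | cons a ll ih =>
    intro hc hlen x hx
    cases ll with
    | nil => simp at hlen
    | cons b lt =>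
      have hab : pathAdj n a b := (List.isChain_cons_cons.mp hc).1
      rcases List.mem_cons.mp hx with rfl | hx
      · exact ⟨hab.2.1, hab.2.2.1⟩
      · cases lt with
        | nil =>
          simp at hx; subst hx
          exact ⟨hab.2.2.2.1, hab.2.2.2.2⟩
        | cons d dt =>
          exact ih (List.isChain_cons_cons.mp hc).2 (by simp) x hx


/-! ### weight sums -/

def W (w : ℕ → ℕ → ℚ) (a b : ℕ) : ℚ := ∑ k ∈ Finset.Ico a b, w k (k+1)

def Wd (w : ℕ → ℕ → ℚ) (a b : ℕ) : ℚ := W w (min a b) (max a b)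

variable {w : ℕ → ℕ → ℚ}

lemma W_nonneg (hwpos : ∀ a b, 0 < w a b) (a b : ℕ) : 0 ≤ W w a b :=
  Finset.sum_nonneg fun k _ => le_of_lt (hwpos k (k+1))

lemma W_add {a b c : ℕ} (hab : a ≤ b) (hbc : b ≤ c) : W w a b + W w b c = W w a c :=
  Finset.sum_Ico_consecutive _ hab hbc

lemma W_single (a : ℕ) : W w a (a+1) = w a (a+1) := by
  rw [W, Nat.Ico_succ_singleton, Finset.sum_singleton]

lemma Wd_same (a : ℕ) : Wd w a a = 0 := by simp [Wd, W]

lemma Wd_eq_W {a b : ℕ} (h : a ≤ b) : Wd w a b = W w a b := by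
  simp [Wd, min_eq_left h, max_eq_right h]

lemma Wd_symm (a b : ℕ) : Wd w a b = Wd w b a := by
  simp [Wd, min_comm, max_comm]

lemma Wd_step (hwpos : ∀ a b, 0 < w a b) (hwsym : ∀ a b, w a b = w b a)
    {a b : ℕ} (hab : stepRel a b) (y : ℕ) :
    Wd w a y ≤ w a b + Wd w b y := by
  rcases hab with rfl | rfl
  · -- b = a + 1
    rcases le_or_gt (a+1) y with h | h
    · rw [Wd_eq_W (by omega), Wd_eq_W h, ← W_add (Nat.le_succ a) h, W_single]
    · have hya : y ≤ a := by omega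
      rw [Wd_symm, Wd_eq_W hya, Wd_symm, Wd_eq_W (by omega), ← W_add hya (Nat.le_succ a), W_single]
      linarith [le_of_lt (hwpos a (a+1))]
  · -- a = b + 1
    rcases le_or_gt (b+1) y with h | h
    · rw [Wd_eq_W h, Wd_eq_W (by omega), ← W_add (Nat.le_succ b) h, W_single, hwsym (b+1) b]
      linarith [le_of_lt (hwpos b (b+1))]
    · have hya : y ≤ b := by omega
      rw [Wd_symm, Wd_eq_W (by omega), Wd_symm, Wd_eq_W hya, ← W_add hya (Nat.le_succ b), W_single,
        hwsym (b+1) b]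
      linarith

/-- cost of any walk from `x` to `y` is at least the distance -/
lemma cost_ge_Wd (hwpos : ∀ a b, 0 < w a b) (hwsym : ∀ a b, w a b = w b a) :
    ∀ {l : List ℕ}, l.Chain' stepRel → ∀ {x y : ℕ}, l.head? = some x → l.getLast? = some y →
      Wd w x y ≤ cost w l := by
  intro l
  induction l with
  | nil => intro _ x y h; simp at h
  | cons a ll ih =>
    intro hc x y hh hl
    have hax : a = x := by simpa using hh
    subst hax
    cases ll with
    | nil =>
      have : a = y := by simpa using hl
      subst this
      simp [Wd_same, cost]
    | cons b lt =>
      have hstep : stepRel a b := (List.isChain_cons_cons.mp hc).1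
      have hl' : (b :: lt).getLast? = some y := by rwa [List.getLast?_cons_cons] at hl
      have hrec := ih (List.isChain_cons_cons.mp hc).2 rfl hl'
      rw [cost_cons' w a (show (b :: lt).head? = some b from rfl)]
      calc Wd w a y ≤ w a b + Wd w b y := Wd_step hwpos hwsym hstep y
        _ ≤ w a b + cost w (b :: lt) := by linarith

/-! ### segment lemmas -/

lemma seg_same (x : ℕ) : seg x x = [x] := by simp [seg, List.range_succ]

lemma seg_asc {x y : ℕ} (h : x < y) : seg x y = x :: seg (x+1) y := by
  unfold seg
  rw [if_pos (le_of_lt h), if_pos (show x + 1 ≤ y by omega)]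
  rw [show y - x + 1 = (y - (x+1) + 1) + 1 by omega, List.range_succ_eq_map]
  simp only [List.map_cons, Nat.add_zero, List.map_map]
  congr 1
  apply List.map_congr_left
  intro k _
  simp [Nat.succ_eq_add_one]; omega

lemma seg_desc {x y : ℕ} (h : y < x) : seg x y = x :: seg (x-1) y := by
  unfold seg
  rw [if_neg (by omega)]
  rcases eq_or_lt_of_le (Nat.succ_le_of_lt h) with heq | hlt
  · -- x = y + 1 : seg (x-1) y = [y]
    rw [if_pos (by omega)]
    rw [show x - y + 1 = 2 by omega, show y - (x-1) + 1 = 1 by omega]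
    simp [List.range_succ]
  · rw [if_neg (by omega)]
    rw [show x - y + 1 = ((x-1) - y + 1) + 1 by omega, List.range_succ_eq_map]
    simp only [List.map_cons, Nat.sub_zero, List.map_map]
    congr 1
    apply List.map_congr_left
    intro k _
    simp [Nat.succ_eq_add_one]; omega

lemma seg_ne_nil (x y : ℕ) : seg x y ≠ [] := by
  rcases lt_trichotomy x y with h | rfl | h
  · rw [seg_asc h]; simp
  · rw [seg_same]; simp
  · rw [seg_desc h]; simp

lemma head?_seg (x y : ℕ) : (seg x y).head? = some x := by
  rcases lt_trichotomy x y with h | rfl | h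
  · rw [seg_asc h]; rfl
  · rw [seg_same]; rfl
  · rw [seg_desc h]; rfl

lemma length_seg (x y : ℕ) : (seg x y).length = (y - x) + (x - y) + 1 := by
  unfold seg
  split <;> simp <;> omega

lemma seg_getElem?_asc {x y : ℕ} (h : x ≤ y) {k : ℕ} (hk : k ≤ y - x) :
    (seg x y)[k]? = some (x + k) := by
  unfold seg
  rw [if_pos h, List.getElem?_map, List.getElem?_range (by omega)]
  rfl

lemma seg_getElem?_desc {x y : ℕ} (h : y ≤ x) {k : ℕ} (hk : k ≤ x - y) :
    (seg x y)[k]? = some (x - k) := by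
  rcases eq_or_lt_of_le h with rfl | h'
  · have : k = 0 := by omega
    subst this
    rw [seg_same]; simp
  · unfold seg
    rw [if_neg (by omega), List.getElem?_map, List.getElem?_range (by omega)]
    rfl

lemma getLast?_seg (x y : ℕ) : (seg x y).getLast? = some y := by
  rw [List.getLast?_eq_getElem?, length_seg]
  rcases le_or_gt x y with h | h
  · rw [show y - x + (x - y) + 1 - 1 = y - x by omega, seg_getElem?_asc h (le_refl _),
      show x + (y - x) = y by omega]
  · rw [show y - x + (x - y) + 1 - 1 = x - y by omega, seg_getElem?_desc (le_of_lt h) (le_refl _),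
      show x - (x - y) = y by omega]

lemma mem_seg {x y c : ℕ} (h1 : min x y ≤ c) (h2 : c ≤ max x y) : c ∈ seg x y := by
  rcases le_or_gt x y with h | h
  · exact List.mem_iff_getElem?.mpr ⟨c - x, by
      rw [seg_getElem?_asc h (by omega), show x + (c - x) = c by omega]⟩
  · exact List.mem_iff_getElem?.mpr ⟨x - c, by
      rw [seg_getElem?_desc (le_of_lt h) (by omega), show x - (x - c) = c by omega]⟩

lemma sat_seg_asc {x y u v : ℕ} (hxu : x ≤ u) (huv : u ≤ v) (hvy : v ≤ y) :
    Satisfies (seg x y) u v :=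
  ⟨u - x, v - x, by omega,
    by rw [seg_getElem?_asc (by omega) (by omega), show x + (u - x) = u by omega],
    by rw [seg_getElem?_asc (by omega) (by omega), show x + (v - x) = v by omega]⟩

lemma sat_seg_desc {x y u v : ℕ} (hyv : y ≤ v) (hvu : v ≤ u) (hux : u ≤ x) :
    Satisfies (seg x y) u v :=
  ⟨x - u, x - v, by omega,
    by rw [seg_getElem?_desc (by omega) (by omega), show x - (x - u) = u by omega],
    by rw [seg_getElem?_desc (by omega) (by omega), show x - (x - v) = v by omega]⟩

lemma chain'_seg_asc {n : ℕ} : ∀ (d x : ℕ), 1 ≤ x → x + d ≤ n →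
    (seg x (x+d)).Chain' (pathAdj n)
  | 0, x, h1, h2 => by rw [Nat.add_zero, seg_same]; exact List.isChain_singleton _
  | (d+1), x, h1, h2 => by
      rw [seg_asc (by omega)]
      refine List.isChain_cons.mpr ⟨?_, ?_⟩
      · intro b hb
        rw [head?_seg] at hb
        simp at hb; subst hb
        exact ⟨Or.inl rfl, h1, by omega, by omega, by omega⟩
      · have := chain'_seg_asc (n := n) d (x+1) (by omega) (by omega)
        rwa [show x + 1 + d = x + (d+1) by omega] at this

lemma chain'_seg_desc {n : ℕ} : ∀ (d y : ℕ), 1 ≤ y → y + d ≤ n →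
    (seg (y+d) y).Chain' (pathAdj n)
  | 0, y, h1, h2 => by rw [Nat.add_zero, seg_same]; exact List.isChain_singleton _
  | (d+1), y, h1, h2 => by
      rw [seg_desc (by omega)]
      refine List.isChain_cons.mpr ⟨?_, ?_⟩
      · intro b hb
        rw [show y + (d+1) - 1 = y + d by omega, head?_seg] at hb
        simp at hb; subst hb
        exact ⟨Or.inr (by omega), by omega, by omega, by omega, by omega⟩
      · have := chain'_seg_desc (n := n) d y h1 (by omega)
        rwa [show y + (d+1) - 1 = y + d by omega]

lemma chain'_seg {n x y : ℕ} (h1 : 1 ≤ x) (h2 : x ≤ n) (h3 : 1 ≤ y) (h4 : y ≤ n) :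
    (seg x y).Chain' (pathAdj n) := by
  rcases le_or_gt x y with h | h
  · have := chain'_seg_asc (n := n) (y - x) x h1 (by omega)
    rwa [show x + (y - x) = y by omega] at this
  · have := chain'_seg_desc (n := n) (x - y) y h3 (by omega)
    rwa [show y + (x - y) = x by omega] at this

lemma W_empty {a b : ℕ} (h : b ≤ a) : W w a b = 0 := by
  rw [W, Finset.Ico_eq_empty (by omega), Finset.sum_empty]

lemma cost_seg_asc : ∀ (d x : ℕ), cost w (seg x (x+d)) = W w x (x+d)
  | 0, x => by rw [Nat.add_zero, seg_same, W_empty (le_refl x)]; rfl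
  | (d+1), x => by
      rw [seg_asc (by omega), cost_cons' w x (head?_seg _ _)]
      have hrec := cost_seg_asc d (x+1)
      rw [show x + 1 + d = x + (d+1) by omega] at hrec
      rw [hrec, ← W_single (w := w) x, W_add (Nat.le_succ x) (by omega)]

lemma cost_seg_desc (hwsym : ∀ a b, w a b = w b a) : ∀ (d y : ℕ),
    cost w (seg (y+d) y) = W w y (y+d)
  | 0, y => by rw [Nat.add_zero, seg_same, W_empty (le_refl y)]; rfl
  | (d+1), y => by
      rw [seg_desc (by omega), show y + (d+1) - 1 = y + d by omega,
        cost_cons' w (y+(d+1)) (head?_seg _ _), cost_seg_desc hwsym d y]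
      rw [hwsym (y+(d+1)) (y+d), show y + (d+1) = (y+d) + 1 from rfl, ← W_single (w := w) (y+d),
        add_comm (W w (y+d) (y+d+1)), W_add (by omega : y ≤ y + d) (Nat.le_succ _)]

lemma cost_seg (hwsym : ∀ a b, w a b = w b a) (x y : ℕ) : cost w (seg x y) = Wd w x y := by
  rcases le_or_gt x y with h | h
  · have := cost_seg_asc (w := w) (y - x) x
    rw [show x + (y - x) = y by omega] at this
    rw [this, Wd_eq_W h]
  · have := cost_seg_desc hwsym (x - y) y
    rw [show y + (x - y) = x by omega] at this
    rw [this, Wd_symm, Wd_eq_W (le_of_lt h)]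


/-! ### additional small helpers -/

lemma head?_some_ne_nil {l : List ℕ} {x : ℕ} (h : l.head? = some x) : l ≠ [] := by
  rintro rfl; simp at h

lemma SL_zero (l : List ℕ) (k : ℕ) : SL l 0 k = l.take (k+1) := by simp [SL]

lemma head?_take' (l : List ℕ) (k : ℕ) : (l.take (k+1)).head? = l.head? := by
  cases l <;> simp

lemma getLast?_drop' {l : List ℕ} {i : ℕ} (h : i < l.length) :
    (l.drop i).getLast? = l.getLast? := by
  rw [List.getLast?_eq_getElem?, List.getLast?_eq_getElem?, List.length_drop,
    List.getElem?_drop]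
  congr 1
  omega

lemma mem_VC_fst {C : Finset (ℕ × ℕ)} {a b : ℕ} (h : (a, b) ∈ C) : a ∈ VC C := by
  apply Finset.mem_union_left
  exact Finset.mem_image.mpr ⟨(a,b), h, rfl⟩

lemma mem_VC_snd {C : Finset (ℕ × ℕ)} {a b : ℕ} (h : (a, b) ∈ C) : b ∈ VC C := by
  apply Finset.mem_union_right
  exact Finset.mem_image.mpr ⟨(a,b), h, rfl⟩

/-- on a path with `s₀ ≤ left(R) ≤ right(R) ≤ t₀` and positive edge
weights, merging two overlapping right-to-left requests `(s,t)`, `(s',t')` with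
`t' ≤ t ≤ s' ≤ s` into `(s,t')` preserves optimal rides: every optimal ride of the
merged scenario is optimal for the original. -/

theorem merge_requests_optimal (n : ℕ) (w : ℕ → ℕ → ℚ)
    (hwpos : ∀ a b, 0 < w a b) (hwsym : ∀ a b, w a b = w b a)
    (s0 t0 : ℕ) (C : Finset (ℕ × ℕ)) (hst : s0 ≤ t0) (h1 : 1 ≤ s0) (h2 : t0 ≤ n)
    (hC : ∀ v ∈ VC C, s0 ≤ v ∧ v ≤ t0)
    (s t s' t' : ℕ) (hmem : (s, t) ∈ C) (hmem' : (s', t') ∈ C)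
    (hts : t < s) (hts' : t' < s')
    (hord : t' ≤ t ∧ t ≤ s' ∧ s' ≤ s)
    (π : List ℕ)
    (hopt : Optimal ⟨pathAdj n, w, s0, t0,
        insert (s, t') ((C.erase (s, t)).erase (s', t'))⟩ π) :
    Optimal ⟨pathAdj n, w, s0, t0, C⟩ π := by
  classical
  obtain ⟨ht't, hts', hs's⟩ := hord
  obtain ⟨hfeasπ, hminπ⟩ := hopt
  obtain ⟨hrideπ, hheadπ, hlastπ, hsatπ⟩ := hfeasπ
  -- bounds on the four request endpoints
  obtain ⟨hs0s, hst0⟩ := hC s (mem_VC_fst hmem)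
  obtain ⟨hs0t, htt0⟩ := hC t (mem_VC_snd hmem)
  obtain ⟨hs0s', hs't0⟩ := hC s' (mem_VC_fst hmem')
  obtain ⟨hs0t', ht't0⟩ := hC t' (mem_VC_snd hmem')
  have hπchain : π.Chain' stepRel := hrideπ.2.imp (fun a b h => h.1)
  have hsatst' : Satisfies π s t' :=
    hsatπ (s, t') (Finset.mem_insert_self _ _)
  -- Part 1 : π is feasible for the original scenario
  have hfeas1 : Feasible ⟨pathAdj n, w, s0, t0, C⟩ π := by
    refine ⟨hrideπ, hheadπ, hlastπ, ?_⟩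
    intro r hr
    by_cases hr1 : r = (s, t)
    · subst hr1
      obtain ⟨i, j, hij, hi, hj⟩ := hsatst'
      have hjlen : j < π.length := lt_length_of_getElem? hj
      have hmemt : t ∈ SL π i j :=
        ivt_s6 (SL_chain' hπchain i j) (by rw [SL_head? π hij]; exact hi)
          (by rw [SL_getLast? π hij hjlen]; exact hj) (by omega) (by omega)
      obtain ⟨q, hq1, hq2, hq⟩ := SL_mem hij hmemt
      exact ⟨i, q, hq1, hi, hq⟩
    · by_cases hr2 : r = (s', t')
      · subst hr2
        obtain ⟨i, j, hij, hi, hj⟩ := hsatst'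
        have hjlen : j < π.length := lt_length_of_getElem? hj
        have hmems' : s' ∈ SL π i j :=
          ivt_s6 (SL_chain' hπchain i j) (by rw [SL_head? π hij]; exact hi)
            (by rw [SL_getLast? π hij hjlen]; exact hj) (by omega) (by omega)
        obtain ⟨q, hq1, hq2, hq⟩ := SL_mem hij hmems'
        exact ⟨q, j, hq2, hq, hj⟩
      · refine hsatπ r (Finset.mem_insert_of_mem ?_)
        exact Finset.mem_erase.mpr ⟨hr2, Finset.mem_erase.mpr ⟨hr1, hr⟩⟩
  refine ⟨hfeas1, ?_⟩
  -- Part 2 : optimality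
  intro ρ hρ
  obtain ⟨hrideρ, hheadρ, hlastρ, hsatρ⟩ := hρ
  have hchain : ρ.Chain' stepRel := hrideρ.2.imp (fun a b h => h.1)
  by_cases hcaseA : Satisfies ρ s t'
  · -- ρ is already feasible for the merged scenario
    refine hminπ ρ ⟨hrideρ, hheadρ, hlastρ, ?_⟩
    intro r hr
    rcases Finset.mem_insert.mp hr with rfl | hr'
    · exact hcaseA
    · exact hsatρ r (Finset.mem_of_mem_erase (Finset.mem_of_mem_erase hr'))
  · -- Case B : surgery on ρ
    have hsat_st : Satisfies ρ s t := hsatρ (s, t) hmem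
    have hsat_s't' : Satisfies ρ s' t' := hsatρ (s', t') hmem'
    -- the first occurrence F of s
    have hFex : ∃ i : ℕ, ρ[i]? = some s := by
      obtain ⟨i, j, _, hi, _⟩ := hsat_st; exact ⟨i, hi⟩
    set F := Nat.find hFex with hFdef
    have hF : ρ[F]? = some s := Nat.find_spec hFex
    have hFmin : ∀ k < F, ρ[k]? ≠ some s := fun k hk => Nat.find_min hFex hk
    -- occurrences of s' and t'
    obtain ⟨k0, l0, hk0l0, hk0, hl0⟩ := hsat_s't'
    have hl0F : l0 < F := by
      by_contra hcon
      push_neg at hcon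
      exact hcaseA ⟨F, l0, hcon, hF, hl0⟩
    have hk0l0' : k0 < l0 := by
      rcases eq_or_lt_of_le hk0l0 with rfl | h
      · rw [hk0] at hl0; simp at hl0; omega
      · exact h
    -- the first occurrence G of t after F
    have hGex : ∃ j : ℕ, ρ[j]? = some t ∧ F ≤ j := by
      obtain ⟨i, j, hij, hi, hj⟩ := hsat_st
      have hFi : F ≤ i := by
        by_contra hcon
        exact hFmin i (by omega) hi
      exact ⟨j, hj, by omega⟩
    set G := Nat.find hGex with hGdef
    obtain ⟨hGt, hFG⟩ : ρ[G]? = some t ∧ F ≤ G := Nat.find_spec hGex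
    have hGmin : ∀ k, k < G → ¬(ρ[k]? = some t ∧ F ≤ k) := fun k hk => Nat.find_min hGex hk
    have hFG' : F < G := lt_of_le_of_ne hFG (fun heq => by
      rw [← heq, hF] at hGt; simp at hGt; omega)
    -- the last occurrence E of s before G
    set E := Nat.findGreatest (fun p => ρ[p]? = some s) G with hEdef
    have hE : ρ[E]? = some s := Nat.findGreatest_spec (P := fun p => ρ[p]? = some s) (le_of_lt hFG') hF
    have hFE : F ≤ E := Nat.le_findGreatest (P := fun p => ρ[p]? = some s) (le_of_lt hFG') hF
    have hEG : E ≤ G := Nat.findGreatest_le G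
    have hEmax : ∀ k, E < k → k ≤ G → ρ[k]? ≠ some s := fun k hk1 hk2 =>
      Nat.findGreatest_is_greatest (P := fun p => ρ[p]? = some s) hk1 hk2
    have hEG' : E < G := lt_of_le_of_ne hEG (fun heq => by
      rw [← heq, hE] at hGt; simp at hGt; omega)
    have hGlen : G < ρ.length := lt_length_of_getElem? hGt
    have hlen2 : 2 ≤ ρ.length := by omega
    -- the pieces of ρ
    set A := SL ρ 0 k0 with hAdef
    set Bp := SL ρ k0 F with hBdef
    set M := SL ρ F E with hMdef
    set Dp := SL ρ E G with hDdef
    set S := ρ.drop G with hSdef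
    have hk0F : k0 ≤ F := by omega
    have hρ0 : ρ[0]? = some s0 := by
      rw [← head?_eq_getElem?']; exact hheadρ
    -- head? and getLast? of the pieces
    have hAhead : A.head? = some s0 := by rw [hAdef, SL_head? ρ (Nat.zero_le k0)]; exact hρ0
    have hAlast : A.getLast? = some s' := by
      rw [hAdef, SL_getLast? ρ (Nat.zero_le k0) (by omega)]; exact hk0
    have hBhead : Bp.head? = some s' := by rw [hBdef, SL_head? ρ hk0F]; exact hk0
    have hBlast : Bp.getLast? = some s := by
      rw [hBdef, SL_getLast? ρ hk0F (by omega)]; exact hF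
    have hMhead : M.head? = some s := by rw [hMdef, SL_head? ρ hFE]; exact hF
    have hMlast : M.getLast? = some s := by
      rw [hMdef, SL_getLast? ρ hFE (by omega)]; exact hE
    have hDhead : Dp.head? = some s := by rw [hDdef, SL_head? ρ hEG]; exact hE
    have hDlast : Dp.getLast? = some t := by
      rw [hDdef, SL_getLast? ρ hEG hGlen]; exact hGt
    have hShead : S.head? = some t := by rw [hSdef, List.head?_drop]; exact hGt
    have hSlast : S.getLast? = some t0 := by rw [hSdef, getLast?_drop' hGlen]; exact hlastρ
    -- decompositions of ρ
    have hdec0 : glue A (ρ.drop k0) = ρ := by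
      rw [hAdef, SL_zero]; exact glue_take_drop (by omega)
    have hdec1 : glue Bp (ρ.drop F) = ρ.drop k0 := by
      have h := glue_take_drop (l := ρ.drop k0) (i := F - k0)
        (by rw [List.length_drop]; omega)
      rw [List.drop_drop, show k0 + (F - k0) = F by omega] at h
      rw [hBdef, SL]
      rw [show F - k0 + 1 = F - k0 + 1 from rfl]
      exact h
    have hdec2 : glue M (ρ.drop E) = ρ.drop F := by
      have h := glue_take_drop (l := ρ.drop F) (i := E - F)
        (by rw [List.length_drop]; omega)
      rw [List.drop_drop, show F + (E - F) = E by omega] at h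
      rw [hMdef, SL]
      exact h
    have hdec3 : glue Dp S = ρ.drop E := by
      have h := glue_take_drop (l := ρ.drop E) (i := G - E)
        (by rw [List.length_drop]; omega)
      rw [List.drop_drop, show E + (G - E) = G by omega] at h
      rw [hDdef, hSdef, SL]
      exact h
    -- compatibilities for the decomposition
    have cA' : Compat A (ρ.drop k0) := ⟨s', hAlast, by rw [List.head?_drop]; exact hk0⟩
    have cB' : Compat Bp (ρ.drop F) := ⟨s, hBlast, by rw [List.head?_drop]; exact hF⟩
    have cM' : Compat M (ρ.drop E) := ⟨s, hMlast, by rw [List.head?_drop]; exact hE⟩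
    have cD' : Compat Dp S := ⟨t, hDlast, hShead⟩
    -- the minimum m of Bp
    have hBne : Bp ≠ [] := head?_some_ne_nil hBhead
    obtain ⟨m, hmB, hmmin⟩ := exists_min_list Bp hBne
    have ht'B : t' ∈ Bp := by
      rw [hBdef]
      exact SL_mem_of (le_of_lt hk0l0') (le_of_lt hl0F) hl0
    have hmt' : m ≤ t' := hmmin t' ht'B
    have hm1 : 1 ≤ m := by
      obtain ⟨q, _, _, hq⟩ := SL_mem hk0F (hBdef ▸ hmB)
      exact (ride_bounds hrideρ.2 hlen2 m (mem_of_elem? hq)).1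
    -- value bounds on Bp and Dp
    have hBle : ∀ x ∈ Bp, x ≤ s := by
      intro x hx
      obtain ⟨q, hq1, hq2, hq⟩ := SL_mem hk0F (hBdef ▸ hx)
      by_contra hgt
      push_neg at hgt
      have hqF : q < F := by
        rcases eq_or_lt_of_le hq2 with rfl | h
        · rw [hF] at hq; simp at hq; omega
        · exact h
      have hmem_s : s ∈ SL ρ 0 q :=
        ivt_s6 (SL_chain' hchain 0 q) (by rw [SL_head? ρ (Nat.zero_le q)]; exact hρ0)
          (by rw [SL_getLast? ρ (Nat.zero_le q) (by omega)]; exact hq) (by omega) (by omega)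
      obtain ⟨q', _, hq'2, hq'⟩ := SL_mem (Nat.zero_le q) hmem_s
      exact hFmin q' (by omega) hq'
    have hDval : ∀ x ∈ Dp, t ≤ x ∧ x ≤ s := by
      intro x hx
      obtain ⟨q, hq1, hq2, hq⟩ := SL_mem hEG (hDdef ▸ hx)
      constructor
      · by_contra hlt
        push_neg at hlt
        have hqG : q < G := by
          rcases eq_or_lt_of_le hq2 with rfl | h
          · rw [hGt] at hq; simp at hq; omega
          · exact h
        have hqE : E < q := by
          rcases eq_or_lt_of_le hq1 with rfl | h
          · rw [hE] at hq; simp at hq; omega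
          · exact h
        have hmem_t : t ∈ SL ρ E q :=
          ivt_s6 (SL_chain' hchain E q) (by rw [SL_head? ρ (le_of_lt hqE)]; exact hE)
            (by rw [SL_getLast? ρ (le_of_lt hqE) (by omega)]; exact hq) (by omega) (by omega)
        obtain ⟨q', hq'1, hq'2, hq'⟩ := SL_mem (le_of_lt hqE) hmem_t
        exact hGmin q' (by omega) ⟨hq', by omega⟩
      · by_contra hgt
        push_neg at hgt
        have hqG : q < G := by
          rcases eq_or_lt_of_le hq2 with rfl | h
          · rw [hGt] at hq; simp at hq; omega
          · exact h
        have hqE : E < q := by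
          rcases eq_or_lt_of_le hq1 with rfl | h
          · rw [hE] at hq; simp at hq; omega
          · exact h
        have hmem_s : s ∈ SL ρ q G :=
          ivt_s6 (SL_chain' hchain q G) (by rw [SL_head? ρ (le_of_lt hqG)]; exact hq)
            (by rw [SL_getLast? ρ (le_of_lt hqG) hGlen]; exact hGt) (by omega) (by omega)
        obtain ⟨q', hq'1, hq'2, hq'⟩ := SL_mem (le_of_lt hqG) hmem_s
        exact hEmax q' (by omega) (by omega) hq'
    -- the new ride σ
    set U1 := seg s' s with hU1def
    set D2 := seg s m with hD2def
    set U2 := seg m t with hU2def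
    set R4 := glue U2 S with hR4def
    set R3 := glue D2 R4 with hR3def
    set R2 := glue M R3 with hR2def
    set R1 := glue U1 R2 with hR1def
    set σ := glue A R1 with hσdef
    -- compatibilities in σ
    have hR4head : R4.head? = some m := by
      rw [hR4def, head?_glue _ (seg_ne_nil m t), head?_seg]
    have hR3head : R3.head? = some s := by
      rw [hR3def, head?_glue _ (seg_ne_nil s m), head?_seg]
    have hR2head : R2.head? = some s := by
      rw [hR2def, head?_glue _ (head?_some_ne_nil hMhead)]; exact hMhead
    have hR1head : R1.head? = some s' := by
      rw [hR1def, head?_glue _ (seg_ne_nil s' s), head?_seg]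
    have cU2S : Compat U2 S := ⟨t, hU2def ▸ getLast?_seg m t, hShead⟩
    have cD2R4 : Compat D2 R4 := ⟨m, hD2def ▸ getLast?_seg s m, hR4head⟩
    have cMR3 : Compat M R3 := ⟨s, hMlast, hR3head⟩
    have cU1R2 : Compat U1 R2 := ⟨s, hU1def ▸ getLast?_seg s' s, hR2head⟩
    have cAR1 : Compat A R1 := ⟨s', hAlast, hR1head⟩
    -- memberships lift
    have memR4_of_S : ∀ x, x ∈ S → x ∈ R4 := fun x hx => mem_glue_right cU2S hx
    have memR3_of_D2 : ∀ x, x ∈ D2 → x ∈ R3 := fun x hx => mem_glue_left hx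
    have memR3_of_R4 : ∀ x, x ∈ R4 → x ∈ R3 := fun x hx => mem_glue_right cD2R4 hx
    have memR2_of_R3 : ∀ x, x ∈ R3 → x ∈ R2 := fun x hx => mem_glue_right cMR3 hx
    have memR2_of_M : ∀ x, x ∈ M → x ∈ R2 := fun x hx => mem_glue_left hx
    have memR1_of_R2 : ∀ x, x ∈ R2 → x ∈ R1 := fun x hx => mem_glue_right cU1R2 hx
    -- satisfaction lifts
    have liftR1 : ∀ u v, Satisfies R1 u v → Satisfies σ u v := fun u v h =>
      sat_glue_right cAR1 h
    have liftR2 : ∀ u v, Satisfies R2 u v → Satisfies σ u v := fun u v h =>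
      liftR1 u v (sat_glue_right cU1R2 h)
    have liftR3 : ∀ u v, Satisfies R3 u v → Satisfies σ u v := fun u v h =>
      liftR2 u v (sat_glue_right cMR3 h)
    have liftR4 : ∀ u v, Satisfies R4 u v → Satisfies σ u v := fun u v h =>
      liftR3 u v (sat_glue_right cD2R4 h)
    -- early occurrence of any value ≤ s
    have early_sat : ∀ u' v', s0 ≤ u' → u' ≤ s → v' ∈ R2 → Satisfies σ u' v' := by
      intro u' v' hu1 hu2 hvR2
      rcases le_or_gt u' s' with hle | hlt
      · have huA : u' ∈ A :=
          ivt_s6 (SL_chain' hchain 0 k0) (hAdef ▸ hAhead) (hAdef ▸ hAlast)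
            (by omega) (by omega)
        exact sat_glue_mem cAR1 huA (memR1_of_R2 _ hvR2)
      · have huU1 : u' ∈ U1 := hU1def ▸ mem_seg (by omega) (by omega)
        exact liftR1 _ _ (sat_glue_mem cU1R2 huU1 hvR2)
    -- membership of values in D2 and S
    have memD2 : ∀ x, m ≤ x → x ≤ s → x ∈ D2 := fun x h1 h2 =>
      hD2def ▸ mem_seg (by omega) (by omega)
    have memS : ∀ x, t ≤ x → x ≤ t0 → x ∈ S := fun x h1 h2 =>
      ivt_s6 (hSdef ▸ hchain.drop G) hShead hSlast (by omega) (by omega)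
    -- the main transfer of satisfied requests
    have htrans : ∀ u v, s0 ≤ u → u ≤ t0 → s0 ≤ v → v ≤ t0 →
        Satisfies ρ u v → Satisfies σ u v := by
      intro u v hu1 hu2 hv1 hv2 hsatuv
      rw [← hdec0] at hsatuv
      rcases sat_glue_cases cA' hsatuv with hcA | h1 | ⟨huA, hv⟩
      · exact sat_glue_left hcA
      · rw [← hdec1] at h1
        rcases sat_glue_cases cB' h1 with hcB | h2 | ⟨huB, hv⟩
        · obtain ⟨huBm, hvBm⟩ := sat_mems hcB
          exact early_sat u v hu1 (hBle u huBm)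
            (memR2_of_R3 _ (memR3_of_D2 _ (memD2 v (hmmin v hvBm) (hBle v hvBm))))
        · rw [← hdec2] at h2
          rcases sat_glue_cases cM' h2 with hcM | h3 | ⟨huM, hv⟩
          · exact liftR2 u v (sat_glue_left hcM)
          · rw [← hdec3] at h3
            rcases sat_glue_cases cD' h3 with hcD | hcS | ⟨huD, hvS⟩
            · obtain ⟨huDm, hvDm⟩ := sat_mems hcD
              obtain ⟨htu, hus⟩ := hDval u huDm
              obtain ⟨htv, hvs⟩ := hDval v hvDm
              rcases le_total v u with hvu | huv
              · refine liftR3 u v (sat_glue_left ?_)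
                rw [hD2def]
                exact sat_seg_desc (by omega) hvu hus
              · exact liftR3 u v (sat_glue_mem cD2R4 (memD2 u (by omega) hus)
                  (memR4_of_S v (memS v (by omega) hv2)))
            · exact liftR4 u v (sat_glue_right cU2S hcS)
            · obtain ⟨htu, hus⟩ := hDval u huD
              exact liftR3 u v (sat_glue_mem cD2R4 (memD2 u (by omega) hus)
                (memR4_of_S v hvS))
          · -- u ∈ M, v ∈ ρ.drop E
            rw [← hdec3] at hv
            have hvR3 : v ∈ R3 := by
              rcases mem_glue_cases hv with hvD | hvS
              · obtain ⟨htv, hvs⟩ := hDval v hvD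
                exact memR3_of_D2 _ (memD2 v (by omega) hvs)
              · exact memR3_of_R4 _ (memR4_of_S v hvS)
            exact liftR2 u v (sat_glue_mem cMR3 huM hvR3)
        · -- u ∈ Bp, v ∈ ρ.drop F
          rw [← hdec2] at hv
          have hvR2 : v ∈ R2 := by
            rcases mem_glue_cases hv with hvM | hv3
            · exact memR2_of_M _ hvM
            · rw [← hdec3] at hv3
              rcases mem_glue_cases hv3 with hvD | hvS
              · obtain ⟨htv, hvs⟩ := hDval v hvD
                exact memR2_of_R3 _ (memR3_of_D2 _ (memD2 v (by omega) hvs))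
              · exact memR2_of_R3 _ (memR3_of_R4 _ (memR4_of_S v hvS))
          exact early_sat u v hu1 (hBle u huB) hvR2
      · -- u ∈ A, v ∈ ρ.drop k0
        rw [← hdec1] at hv
        have hvR1 : v ∈ R1 := by
          rcases mem_glue_cases hv with hvB | hv2
          · exact memR1_of_R2 _ (memR2_of_R3 _ (memR3_of_D2 _
              (memD2 v (hmmin v hvB) (hBle v hvB))))
          · rw [← hdec2] at hv2
            rcases mem_glue_cases hv2 with hvM | hv3
            · exact memR1_of_R2 _ (memR2_of_M _ hvM)
            · rw [← hdec3] at hv3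
              rcases mem_glue_cases hv3 with hvD | hvS
              · obtain ⟨htv, hvs⟩ := hDval v hvD
                exact memR1_of_R2 _ (memR2_of_R3 _ (memR3_of_D2 _ (memD2 v (by omega) hvs)))
              · exact memR1_of_R2 _ (memR2_of_R3 _ (memR3_of_R4 _ (memR4_of_S v hvS)))
        exact sat_glue_mem cAR1 huA hvR1
    -- feasibility of σ for the merged scenario
    have hAne : A ≠ [] := head?_some_ne_nil hAhead
    have hσfeas : Feasible ⟨pathAdj n, w, s0, t0,
        insert (s, t') ((C.erase (s, t)).erase (s', t'))⟩ σ := by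
      refine ⟨⟨?_, ?_⟩, ?_, ?_, ?_⟩
      · rw [hσdef, glue]
        simp [hAne]
      · -- chain'
        refine chain'_glue cAR1 (SL_chain' hrideρ.2 0 k0) ?_
        refine chain'_glue cU1R2 (chain'_seg (by omega) (by omega) (by omega) (by omega)) ?_
        refine chain'_glue cMR3 (SL_chain' hrideρ.2 F E) ?_
        refine chain'_glue cD2R4 (chain'_seg (by omega) (by omega) (by omega) (by omega)) ?_
        refine chain'_glue cU2S (chain'_seg (by omega) (by omega) (by omega) (by omega)) ?_
        exact hrideρ.2.drop G
      · rw [hσdef, head?_glue _ hAne]; exact hAhead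
      · rw [hσdef, getLast?_glue cAR1, hR1def, getLast?_glue cU1R2, hR2def,
          getLast?_glue cMR3, hR3def, getLast?_glue cD2R4, hR4def, getLast?_glue cU2S]
        exact hSlast
      · intro r hr
        rcases Finset.mem_insert.mp hr with rfl | hr'
        · -- the merged request (s, t')
          have hsU1 : s ∈ U1 := hU1def ▸ mem_seg (by omega) (by omega)
          have ht'R2 : t' ∈ R2 := memR2_of_R3 _ (memR3_of_D2 _ (memD2 t' hmt' (by omega)))
          exact liftR1 s t' (sat_glue_mem cU1R2 hsU1 ht'R2)
        · have hrC : r ∈ C := Finset.mem_of_mem_erase (Finset.mem_of_mem_erase hr')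
          obtain ⟨hru, hrv⟩ := hC r.1 (mem_VC_fst (by rwa [← Prod.mk.eta (p := r)] at hrC))
            |>.imp id id
          obtain ⟨hrv1, hrv2⟩ := hC r.2 (mem_VC_snd (by rwa [← Prod.mk.eta (p := r)] at hrC))
          exact htrans r.1 r.2 hru hrv hrv1 hrv2 (hsatρ r hrC)
    -- cost comparison
    have hcostσ : cost w σ =
        cost w A + cost w U1 + cost w M + cost w D2 + cost w U2 + cost w S := by
      rw [hσdef, cost_glue w cAR1, hR1def, cost_glue w cU1R2, hR2def, cost_glue w cMR3,
        hR3def, cost_glue w cD2R4, hR4def, cost_glue w cU2S]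
      ring
    have hcostρ : cost w ρ = cost w A + cost w Bp + cost w M + cost w Dp + cost w S := by
      conv_lhs => rw [← hdec0, ← hdec1, ← hdec2, ← hdec3]
      rw [cost_glue w (by rwa [hdec3, hdec2, hdec1] : Compat A (glue Bp (glue M (glue Dp S)))),
        cost_glue w (by rwa [hdec3, hdec2] : Compat Bp (glue M (glue Dp S))),
        cost_glue w (by rwa [hdec3] : Compat M (glue Dp S)),
        cost_glue w cD']
      ring
    -- lower bound for cost Bp
    obtain ⟨p0, hp0⟩ := List.mem_iff_getElem?.mp hmB
    have hp0len : p0 < Bp.length := lt_length_of_getElem? hp0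
    have hBsplit : glue (Bp.take (p0+1)) (Bp.drop p0) = Bp := glue_take_drop hp0len
    have hBtake_last : (Bp.take (p0+1)).getLast? = some m := by
      rw [← SL_zero, SL_getLast? Bp (Nat.zero_le p0) hp0len]; exact hp0
    have hBdrop_head : (Bp.drop p0).head? = some m := by
      rw [List.head?_drop]; exact hp0
    have hcostB : Wd w s' m + Wd w m s ≤ cost w Bp := by
      have hsplitcost : cost w Bp = cost w (Bp.take (p0+1)) + cost w (Bp.drop p0) := by
        conv_lhs => rw [← hBsplit]
        rw [cost_glue w ⟨m, hBtake_last, hBdrop_head⟩]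
      have hBchain : Bp.Chain' stepRel := hBdef ▸ SL_chain' hchain k0 F
      have hlb1 : Wd w s' m ≤ cost w (Bp.take (p0+1)) :=
        cost_ge_Wd hwpos hwsym (hBchain.take _)
          (by rw [head?_take']; exact hBhead) hBtake_last
      have hlb2 : Wd w m s ≤ cost w (Bp.drop p0) :=
        cost_ge_Wd hwpos hwsym (hBchain.drop _) hBdrop_head
          (by rw [getLast?_drop' hp0len]; exact hBlast)
      linarith
    have hcostD : Wd w s t ≤ cost w Dp :=
      cost_ge_Wd hwpos hwsym (hDdef ▸ SL_chain' hchain E G) hDhead hDlast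
    -- the seg costs
    have hcU1 : cost w U1 = Wd w s' s := hU1def ▸ cost_seg hwsym s' s
    have hcD2 : cost w D2 = Wd w s m := hD2def ▸ cost_seg hwsym s m
    have hcU2 : cost w U2 = Wd w m t := hU2def ▸ cost_seg hwsym m t
    -- final arithmetic
    have harith : Wd w s' s + Wd w s m + Wd w m t ≤ cost w Bp + cost w Dp := by
      have hms : m ≤ s := by omega
      have e1 : Wd w s' s = W w s' s := Wd_eq_W hs's
      have e2 : Wd w s m = W w m s := by rw [Wd_symm]; exact Wd_eq_W hms
      have e3 : Wd w m t = W w m t := Wd_eq_W (by omega)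
      have e4 : Wd w s' m = W w m s' := by rw [Wd_symm]; exact Wd_eq_W (by omega)
      have e5 : Wd w s t = W w t s := by rw [Wd_symm]; exact Wd_eq_W (by omega)
      have e6 : Wd w m s = W w m s := Wd_eq_W hms
      have a1 : W w m t + W w t s' = W w m s' := W_add (by omega) (by omega)
      have a2 : W w t s' + W w s' s = W w t s := W_add (by omega) (by omega)
      have a3 : 0 ≤ W w t s' := W_nonneg hwpos t s'
      rw [e1, e2, e3]
      rw [e4, e6] at hcostB
      rw [e5] at hcostD
      linarith
    have hcost_le : cost w σ ≤ cost w ρ := by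
      rw [hcostσ, hcostρ]
      linarith
    calc cost w π ≤ cost w σ := hminπ σ hσfeas
      _ ≤ cost w ρ := hcost_le


end RideSharing
end

section
/- The output C* = {(s₁,t₁),…,(s_h,t_h)} of the Normalize procedure is in normal form: t_i < s_i for every i, and (after sorting by starting node) s_i < t_{i+1} for every i < h. -/
namespace RideSharing

/-- the output of `Normalize` is in normal form.  A terminal set `C*`
(all requests right-to-left, no merge step applicable, no drop step applicable) is
in normal form: the requests are pairwise strictly separated,
i.e. `t₁ < s₁ < t₂ < s₂ < …` after sorting. -/
theorem normalize_output_normal_form (Cstar : Finset (ℕ × ℕ))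
    (hrl : ∀ r ∈ Cstar, r.2 < r.1)
    (hnomerge : ∀ r ∈ Cstar, ∀ r' ∈ Cstar, r ≠ r' →
      ¬(r'.2 ≤ r.2 ∧ r.2 ≤ r'.1 ∧ r'.1 ≤ r.1))
    (hnodrop : ∀ r ∈ Cstar, ∀ r' ∈ Cstar, r ≠ r' →
      ¬(r'.2 ≤ r.2 ∧ r.2 < r.1 ∧ r.1 ≤ r'.1)) :
    ∀ r ∈ Cstar, ∀ r' ∈ Cstar, r ≠ r' → r.1 < r'.2 ∨ r'.1 < r.2 := by
  intro r hr r' hr' hne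
  by_contra h
  push_neg at h
  have h1 := hrl r hr
  have h2 := hrl r' hr'
  have h3 := hnomerge r hr r' hr' hne
  have h4 := hnomerge r' hr' r hr hne.symm
  have h5 := hnodrop r hr r' hr' hne
  have h6 := hnodrop r' hr' r hr hne.symm
  omega

end RideSharing
end

section
/- Let R be a scenario on a path in normal form as above with s₀ ≤ left(R) ≤ right(R) ≤ t₀ and C* = {(s₁,t₁),…,(s_h,t_h)} in normal form. Every feasible ride π for R visits each node v with t_i < v < s_i for some i at least 3 times, each node v equal to some s_i or t_i at least 2 times, and each node v with s₀ ≤ v ≤ t₀ at least once. -/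
namespace RideSharing

private lemma memGE {l : List ℕ} {i a : ℕ} (h : l[i]? = some a) : a ∈ l := by
  have hi : i < l.length := by
    by_contra hc; rw [List.getElem?_eq_none (by omega)] at h; simp at h
  rw [List.getElem?_eq_getElem hi] at h
  exact (Option.some_inj.mp h) ▸ l.getElem_mem hi

private lemma ltLen {l : List ℕ} {i a : ℕ} (h : l[i]? = some a) : i < l.length := by
  by_contra hc; rw [List.getElem?_eq_none (by omega)] at h; simp at h

private lemma count_two {l : List ℕ} {v i j : ℕ} (hij : i < j)
    (hi : l[i]? = some v) (hj : l[j]? = some v) : 2 ≤ l.count v := by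
  have h1 : (l.take j)[i]? = some v := by rw [List.getElem?_take]; simp [hij, hi]
  have h2 : (l.drop j)[0]? = some v := by rw [List.getElem?_drop]; simpa using hj
  have c1 : 1 ≤ (l.take j).count v := List.count_pos_iff.mpr (memGE h1)
  have c2 : 1 ≤ (l.drop j).count v := List.count_pos_iff.mpr (memGE h2)
  calc 2 ≤ (l.take j).count v + (l.drop j).count v := by omega
  _ = l.count v := by rw [← List.count_append, List.take_append_drop]

private lemma count_three {l : List ℕ} {v i j k : ℕ} (hij : i < j) (hjk : j < k)
    (hi : l[i]? = some v) (hj : l[j]? = some v) (hk : l[k]? = some v) :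
    3 ≤ l.count v := by
  have h1 : (l.take j)[i]? = some v := by rw [List.getElem?_take]; simp [hij, hi]
  have h2 : (l.drop j)[0]? = some v := by rw [List.getElem?_drop]; simpa using hj
  have h3 : (l.drop j)[k - j]? = some v := by
    rw [List.getElem?_drop, show j + (k - j) = k by omega]; exact hk
  have c1 : 1 ≤ (l.take j).count v := List.count_pos_iff.mpr (memGE h1)
  have c2 : 2 ≤ (l.drop j).count v := count_two (by omega) h2 h3
  calc 3 ≤ (l.take j).count v + (l.drop j).count v := by omega
  _ = l.count v := by rw [← List.count_append, List.take_append_drop]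

private lemma ivt_aux {n : ℕ} {π : List ℕ} (hc : π.Chain' (pathAdj n)) :
    ∀ (d a b x y v : ℕ), a ≤ b → b - a ≤ d → π[a]? = some x → π[b]? = some y →
      ((x ≤ v ∧ v ≤ y) ∨ (y ≤ v ∧ v ≤ x)) →
      ∃ c, a ≤ c ∧ c ≤ b ∧ π[c]? = some v := by
  intro d
  induction d with
  | zero =>
    intro a b x y v hab hd hx hy hv
    have hba : a = b := by omega
    subst hba
    rw [hx] at hy
    have hxy : x = y := Option.some_inj.mp hy
    have hvx : v = x := by omega
    exact ⟨a, le_refl a, le_refl a, hvx ▸ hx⟩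
  | succ d ih =>
    intro a b x y v hab hd hx hy hv
    by_cases hvx : v = x
    · exact ⟨a, le_refl a, hab, hvx ▸ hx⟩
    have hlt : a < b := by
      rcases Nat.lt_or_ge a b with h' | h'
      · exact h'
      · exfalso
        have hba : a = b := by omega
        subst hba; rw [hx] at hy
        have : x = y := Option.some_inj.mp hy
        omega
    have hb : b < π.length := ltLen hy
    have ha1 : a + 1 < π.length := by omega
    have hxa : π[a]'(by omega) = x := by
      rw [List.getElem?_eq_getElem (by omega)] at hx; exact Option.some_inj.mp hx
    have hadj : pathAdj n (π[a]'(by omega)) (π[a+1]'ha1) := by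
      have := List.isChain_iff_getElem.mp hc a (by omega)
      simpa [List.get_eq_getElem] using this
    have hx' : π[a+1]? = some (π[a+1]'ha1) := List.getElem?_eq_getElem ha1
    have hstep : (π[a+1]'ha1) = x + 1 ∨ x = (π[a+1]'ha1) + 1 := by
      rw [← hxa]; exact hadj.1
    obtain ⟨c, hc1, hc2, hc3⟩ := ih (a+1) b (π[a+1]'ha1) y v (by omega) (by omega) hx' hy
      (by rcases hv with ⟨u1, u2⟩ | ⟨u1, u2⟩
          · exact Or.inl ⟨by omega, u2⟩
          · exact Or.inr ⟨u1, by omega⟩)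
    exact ⟨c, by omega, hc2, hc3⟩

private lemma ivt_s9 {n : ℕ} {π : List ℕ} (hc : π.Chain' (pathAdj n)) {a b x y v : ℕ}
    (hab : a ≤ b) (hx : π[a]? = some x) (hy : π[b]? = some y)
    (hv : (x ≤ v ∧ v ≤ y) ∨ (y ≤ v ∧ v ≤ x)) :
    ∃ c, a ≤ c ∧ c ≤ b ∧ π[c]? = some v :=
  ivt_aux hc (b - a) a b x y v hab le_rfl hx hy hv


/-- every feasible ride for a normal-form scenario visits each node
strictly inside some request interval at least 3 times, each request endpoint at
least twice, and each node of `[s₀,t₀]` at least once. -/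
theorem feasible_occurrence_bounds (n : ℕ) (w : ℕ → ℕ → ℚ)
    (s0 t0 : ℕ) (h : ℕ) (s t : ℕ → ℕ)
    (hrl : ∀ i, i < h → t i < s i)
    (hsep : ∀ i, i + 1 < h → s i < t (i + 1))
    (hfirst : 0 < h → s0 ≤ t 0) (hlast : 0 < h → s (h - 1) ≤ t0)
    (hst : s0 ≤ t0) (h1 : 1 ≤ s0) (h2 : t0 ≤ n)
    (π : List ℕ)
    (hfeas : Feasible ⟨pathAdj n, w, s0, t0,
        (Finset.range h).image (fun i => (s i, t i))⟩ π) :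
    (∀ v, (∃ i, i < h ∧ t i < v ∧ v < s i) → 3 ≤ π.count v) ∧
    (∀ i, i < h → 2 ≤ π.count (s i) ∧ 2 ≤ π.count (t i)) ∧
    (∀ v, s0 ≤ v → v ≤ t0 → 1 ≤ π.count v) := by
  obtain ⟨⟨hne, hchain⟩, hhead, hlastE, hsat⟩ := hfeas
  have hL : 0 < π.length := List.length_pos_iff.mpr hne
  have h0 : π[0]? = some s0 := by rw [← List.head?_eq_getElem?]; exact hhead
  have hE : π[π.length - 1]? = some t0 := by rw [← List.getLast?_eq_getElem?]; exact hlastE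
  have hsat' : ∀ i, i < h → ∃ a b : ℕ, a ≤ b ∧ π[a]? = some (s i) ∧ π[b]? = some (t i) := by
    intro i hi
    exact hsat (s i, t i) (Finset.mem_image.mpr ⟨i, Finset.mem_range.mpr hi, rfl⟩)
  have hs0t : ∀ i, i < h → s0 ≤ t i := by
    intro i
    induction i with
    | zero => intro hi; exact hfirst hi
    | succ k ih =>
      intro hk
      have hk' : k < h := by omega
      have e1 := hsep k hk
      have e2 := hrl k hk'
      have e3 := ih hk'
      omega
  have hmono : ∀ i d, i + d < h → s i ≤ s (i + d) := by
    intro i d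
    induction d with
    | zero => intro _; simp
    | succ e ih =>
      intro hh
      have e1 : s i ≤ s (i + e) := ih (by omega)
      have e2 := hsep (i + e) (by omega)
      have e3 := hrl (i + e + 1) (by omega)
      have : s i ≤ s (i + e + 1) := by omega
      simpa [Nat.add_assoc] using this
  have hst0 : ∀ i, i < h → s i ≤ t0 := by
    intro i hi
    have h0h : 0 < h := by omega
    have e1 : s i ≤ s (i + (h - 1 - i)) := hmono i (h - 1 - i) (by omega)
    rw [show i + (h - 1 - i) = h - 1 by omega] at e1
    exact le_trans e1 (hlast h0h)
  refine ⟨?_, ?_, ?_⟩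
  · rintro v ⟨i, hi, hvt, hvs⟩
    obtain ⟨a, b, hab, ha, hb⟩ := hsat' i hi
    have hanb : a < b := by
      rcases Nat.lt_or_ge a b with h' | h'
      · exact h'
      · exfalso
        have hba : a = b := by omega
        rw [hba, hb] at ha
        have := Option.some_inj.mp ha
        have := hrl i hi
        omega
    have hblen : b < π.length := ltLen hb
    obtain ⟨d, _, hda, hd⟩ := ivt_s9 hchain (Nat.zero_le a) h0 ha
      (Or.inl ⟨by have := hs0t i hi; omega, le_of_lt hvs⟩)
    obtain ⟨e, hae, heb, he⟩ := ivt_s9 hchain (le_of_lt hanb) ha hb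
      (Or.inr ⟨le_of_lt hvt, le_of_lt hvs⟩)
    obtain ⟨f, hbf, _, hf⟩ := ivt_s9 hchain (show b ≤ π.length - 1 by omega) hb hE
      (Or.inl ⟨le_of_lt hvt, le_trans (le_of_lt hvs) (hst0 i hi)⟩)
    have hda' : d < a := by
      have : d ≠ a := by intro hq; rw [hq, ha] at hd; have := Option.some_inj.mp hd; omega
      omega
    have hae' : a < e := by
      have : e ≠ a := by intro hq; rw [hq, ha] at he; have := Option.some_inj.mp he; omega
      omega
    have heb' : e < b := by
      have : e ≠ b := by intro hq; rw [hq, hb] at he; have := Option.some_inj.mp he; omega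
      omega
    have hbf' : b < f := by
      have : f ≠ b := by intro hq; rw [hq, hb] at hf; have := Option.some_inj.mp hf; omega
      omega
    exact count_three (by omega : d < e) (by omega : e < f) hd he hf
  · intro i hi
    obtain ⟨a, b, hab, ha, hb⟩ := hsat' i hi
    have hri := hrl i hi
    have hanb : a < b := by
      rcases Nat.lt_or_ge a b with h' | h'
      · exact h'
      · exfalso
        have hba : a = b := by omega
        rw [hba, hb] at ha
        have := Option.some_inj.mp ha
        omega
    have hblen : b < π.length := ltLen hb
    constructor
    · obtain ⟨c, hbc, _, hcv⟩ := ivt_s9 hchain (show b ≤ π.length - 1 by omega) hb hE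
        (Or.inl ⟨le_of_lt hri, hst0 i hi⟩)
      have hbc' : b < c := by
        have : c ≠ b := by intro hq; rw [hq, hb] at hcv; have := Option.some_inj.mp hcv; omega
        omega
      exact count_two (by omega : a < c) ha hcv
    · obtain ⟨d, _, hda, hdv⟩ := ivt_s9 hchain (Nat.zero_le a) h0 ha
        (Or.inl ⟨hs0t i hi, le_of_lt hri⟩)
      have hda' : d < a := by
        have : d ≠ a := by intro hq; rw [hq, ha] at hdv; have := Option.some_inj.mp hdv; omega
        omega
      exact count_two (by omega : d < b) hdv hb
  · intro v hv1 hv2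
    obtain ⟨c, _, _, hcv⟩ := ivt_s9 hchain (Nat.zero_le (π.length - 1)) h0 hE
      (Or.inl ⟨hv1, hv2⟩)
    exact List.count_pos_iff.mpr (memGE hcv)


end RideSharing
end

section
/- Suppose there exists an optimal ride π' for a path scenario R with leftIdx(π') < rightIdx(π'). Then there exists an optimal ride π with leftIdx(π) < rightIdx(π) such that rm(π), the maximum node visited by π up to time leftIdx(π), belongs to V_C ∪ {s₀, t₀}. -/
namespace RideSharing

lemma cost_append_cons (w : ℕ → ℕ → ℚ) (xs : List ℕ) (y : ℕ) (ys : List ℕ) :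
    cost w (xs ++ y :: ys) = cost w (xs ++ [y]) + cost w (y :: ys) := by
  induction xs with
  | nil => simp [cost]
  | cons a xs ih =>
    cases xs with
    | nil => simp only [List.nil_append, List.cons_append, cost]; ring
    | cons c rest =>
      simp only [List.cons_append, cost] at *
      rw [ih]; ring

lemma satisfies_cons {l : List ℕ} {s t a : ℕ} (h : Satisfies l s t) : Satisfies (a :: l) s t := by
  obtain ⟨i, j, hij, hi, hj⟩ := h
  exact ⟨i+1, j+1, by omega, by simpa using hi, by simpa using hj⟩

lemma satisfies_sublist {l l' : List ℕ} {s t : ℕ} (h : l.Sublist l') (hs : Satisfies l s t) :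
    Satisfies l' s t := by
  induction h with
  | slnil => exact hs
  | cons a h ih => exact satisfies_cons (ih hs)
  | cons_cons a h ih =>
    obtain ⟨i, j, hij, hi, hj⟩ := hs
    match i, j with
    | 0, 0 =>
      simp at hi hj
      exact ⟨0, 0, le_refl _, by simp [hi], by simp [hj]⟩
    | 0, j+1 =>
      simp at hi hj
      have : t ∈ _ := h.mem (List.mem_iff_getElem?.2 ⟨j, hj⟩)
      obtain ⟨j', hj'⟩ := List.mem_iff_getElem?.1 this
      exact ⟨0, j'+1, by omega, by simp [hi], by simpa using hj'⟩
    | i+1, 0 => omega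
    | i+1, j+1 =>
      simp only [List.getElem?_cons_succ] at hi hj
      exact satisfies_cons (ih ⟨i, j, by omega, hi, hj⟩)

lemma le_foldr_max {l : List ℕ} {a : ℕ} (h : a ∈ l) : a ≤ l.foldr max 0 := by
  induction l with
  | nil => simp at h
  | cons b l ih =>
    rcases List.mem_cons.1 h with rfl | h
    · exact le_max_left _ _
    · exact le_trans (ih h) (le_max_right _ _)

lemma foldr_max_mem (l : List ℕ) : l.foldr max 0 = 0 ∨ l.foldr max 0 ∈ l := by
  induction l with
  | nil => simp
  | cons b l ih =>
    rcases ih with h | h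
    · simp [List.foldr_cons, h]
    · rcases max_choice b (l.foldr max 0) with h' | h' <;> simp [List.foldr_cons, h'] <;> tauto

lemma indexOf_le {l : List ℕ} {v : ℕ} {k : ℕ} (h : l[k]? = some v) : l.idxOf v ≤ k := by
  induction l generalizing k with
  | nil => simp at h
  | cons a l ih =>
    match k with
    | 0 => simp at h; simp [h, List.idxOf_cons_self]
    | k+1 =>
      simp only [List.getElem?_cons_succ] at h
      by_cases hv : v = a
      · simp [hv, List.idxOf_cons_self]
      · rw [List.idxOf_cons_ne _ (by exact fun hh => hv hh.symm)]
        have := ih h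
        omega


-- getElem? of X ++ u :: W at small indices
lemma getElem?_left {X W : List ℕ} {u : ℕ} {k : ℕ} (h : k ≤ X.length) :
    (X ++ u :: W)[k]? = (X ++ [u])[k]? := by
  rcases lt_or_eq_of_le h with h | h
  · rw [List.getElem?_append (l₂ := u :: W), if_pos h, List.getElem?_append (l₂ := [u]), if_pos h]
  · subst h
    rw [List.getElem?_append_right (le_refl _), List.getElem?_append_right (le_refl _)]
    simp

lemma getElem?_right {X W : List ℕ} {u : ℕ} {k : ℕ} (h : X.length < k) :
    (X ++ u :: W)[k]? = W[k - X.length - 1]? := by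
  rw [List.getElem?_append_right (by omega), List.getElem?_cons, if_neg (by omega)]

-- the full list l = X ++ u :: Y ++ u :: Z; l2 = X ++ u :: Z
section remove
variable {X Y Z : List ℕ} {u : ℕ}

lemma rem_good {k v : ℕ} (h : (X ++ u :: (Y ++ u :: Z))[k]? = some v) (hv : v ∉ Y) :
    k ≤ X.length ∨ X.length + Y.length + 1 ≤ k := by
  by_contra hc
  push_neg at hc
  obtain ⟨h1, h2⟩ := hc
  rw [getElem?_right h1] at h
  rw [List.getElem?_append, if_pos (show k - X.length - 1 < Y.length by omega)] at h
  exact hv (List.mem_iff_getElem?.2 ⟨_, h⟩)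

def remF (x y k : ℕ) : ℕ := if k ≤ x then k else if k = x + y + 1 then x else k - y - 1

lemma rem_map {k : ℕ} (hk : k ≤ X.length ∨ X.length + Y.length + 1 ≤ k) :
    (X ++ u :: Z)[remF X.length Y.length k]? = (X ++ u :: (Y ++ u :: Z))[k]? := by
  set x := X.length; set y := Y.length
  rcases hk with hk | hk
  · rw [remF, if_pos hk, getElem?_left (W := Z) hk, getElem?_left (W := Y ++ u :: Z) hk]
  · rcases eq_or_lt_of_le hk with hk' | hk'
    · subst hk'
      rw [remF, if_neg (by omega), if_pos rfl,
        getElem?_right (show x < x + y + 1 by omega),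
        getElem?_left (W := Z) (le_refl x), List.getElem?_concat_length]
      rw [show x + y + 1 - x - 1 = y from by omega,
        List.getElem?_append_right (le_refl _)]
      simp
    · rw [remF, if_neg (by omega), if_neg (by omega),
        getElem?_right (show x < k by omega), getElem?_right (show x < k - y - 1 by omega)]
      rw [List.getElem?_append_right (show y ≤ k - x - 1 by omega)]
      have h3 : k - x - 1 - y = (k - y - 1 - x - 1) + 1 := by omega
      rw [h3, List.getElem?_cons_succ]

lemma rem_mono {i j : ℕ} (hi : i ≤ X.length ∨ X.length + Y.length + 1 ≤ i)
    (hj : j ≤ X.length ∨ X.length + Y.length + 1 ≤ j) (hij : i ≤ j) :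
    remF X.length Y.length i ≤ remF X.length Y.length j := by
  simp only [remF]; split_ifs <;> omega

lemma satisfies_remove {s t : ℕ} (hs : s ∉ Y) (ht : t ∉ Y)
    (h : Satisfies (X ++ u :: (Y ++ u :: Z)) s t) : Satisfies (X ++ u :: Z) s t := by
  obtain ⟨i, j, hij, hi, hj⟩ := h
  have gi := rem_good hi hs
  have gj := rem_good hj ht
  exact ⟨_, _, rem_mono gi gj hij, (rem_map gi).trans hi, (rem_map gj).trans hj⟩

lemma chain'_remove {R : ℕ → ℕ → Prop} (h : (X ++ u :: (Y ++ u :: Z)).Chain' R) :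
    (X ++ u :: Z).Chain' R := by
  rw [show X ++ u :: (Y ++ u :: Z) = X ++ ((u :: Y) ++ (u :: Z)) by simp] at h
  dsimp only [List.Chain'] at h ⊢
  rw [List.isChain_append] at h
  obtain ⟨hX, hYZ, hlink⟩ := h
  rw [List.isChain_append] at hYZ
  rw [List.isChain_append]
  refine ⟨hX, hYZ.2.1, ?_⟩
  intro a ha b hb
  exact hlink a ha b (by simpa using hb)

lemma chain'_dup {R : ℕ → ℕ → Prop} (h : (X ++ u :: (Y ++ u :: Z)).Chain' R) :
    (X ++ u :: (Y ++ u :: (Y ++ u :: Z))).Chain' R := by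
  rw [show X ++ u :: (Y ++ u :: Z) = X ++ ((u :: Y) ++ (u :: Z)) by simp] at h
  rw [show X ++ u :: (Y ++ u :: (Y ++ u :: Z)) = X ++ ((u :: Y) ++ ((u :: Y) ++ (u :: Z))) by simp]
  dsimp only [List.Chain'] at h ⊢
  rw [List.isChain_append] at h ⊢
  obtain ⟨hX, hYZ, hlink⟩ := h
  rw [List.isChain_append] at hYZ
  obtain ⟨hY, hZ, hlink2⟩ := hYZ
  refine ⟨hX, ?_, ?_⟩
  · rw [List.isChain_append]
    exact ⟨hY, by rw [List.isChain_append]; exact ⟨hY, hZ, hlink2⟩, by simpa using hlink2⟩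
  · intro a ha b hb
    exact hlink a ha b (by simpa using hb)

lemma sublist_dup : (X ++ u :: (Y ++ u :: Z)).Sublist (X ++ u :: (Y ++ u :: (Y ++ u :: Z))) := by
  apply List.Sublist.append_left
  apply List.Sublist.cons₂
  apply List.Sublist.append_left
  apply List.Sublist.cons₂
  exact (List.sublist_cons_self u Z).trans (List.sublist_append_right _ _)

end remove

-- discrete IVT
lemma chain_step {n : ℕ} {l : List ℕ} (hc : l.Chain' (pathAdj n)) {i : ℕ} (hi : i + 1 < l.length) :
    pathAdj n l[i] l[i+1] := by
  dsimp only [List.Chain'] at hc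
  rw [List.isChain_iff_getElem] at hc
  simpa using hc i (by omega)

lemma ivt_up {n : ℕ} {l : List ℕ} (hc : l.Chain' (pathAdj n)) (v : ℕ) :
    ∀ (d i : ℕ) {vi vj : ℕ}, l[i]? = some vi → l[i+d]? = some vj → vi ≤ v → v ≤ vj →
      ∃ k, i ≤ k ∧ k ≤ i + d ∧ l[k]? = some v := by
  intro d
  induction d with
  | zero =>
    intro i vi vj hi hj h1 h2
    simp only [Nat.add_zero] at hj
    rw [hi] at hj
    refine ⟨i, le_refl _, by omega, ?_⟩
    rw [hi]
    simp at hj ⊢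
    omega
  | succ d ih =>
    intro i vi vj hi hj h1 h2
    by_cases hv : vi = v
    · exact ⟨i, le_refl _, by omega, by rw [hi, hv]⟩
    have hlen : i + d + 1 < l.length := by
      have := (List.getElem?_eq_some_iff.1 hj).1
      omega
    have hil : i + 1 < l.length := by omega
    have hstep := chain_step hc (show i + 1 < l.length by omega)
    have hgi : l[i]'(by omega) = vi := by
      have := List.getElem?_eq_getElem (l := l) (i := i) (by omega)
      rw [this] at hi; exact Option.some_injective _ hi
    have hnext : l[i+1]? = some (l[i+1]'hil) := List.getElem?_eq_getElem _
    have hb : l[i+1]'hil ≤ v := by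
      rcases hstep.1 with h | h
      · rw [hgi] at h; omega
      · rw [hgi] at h; omega
    obtain ⟨k, hk1, hk2, hk3⟩ := ih (i+1) hnext (by rw [show i+1+d = i+(d+1) by omega]; exact hj) hb h2
    exact ⟨k, by omega, by omega, hk3⟩

lemma ivt_down {n : ℕ} {l : List ℕ} (hc : l.Chain' (pathAdj n)) (v : ℕ) :
    ∀ (d i : ℕ) {vi vj : ℕ}, l[i]? = some vi → l[i+d]? = some vj → v ≤ vi → vj ≤ v →
      ∃ k, i ≤ k ∧ k ≤ i + d ∧ l[k]? = some v := by
  intro d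
  induction d with
  | zero =>
    intro i vi vj hi hj h1 h2
    simp only [Nat.add_zero] at hj
    rw [hi] at hj
    refine ⟨i, le_refl _, by omega, ?_⟩
    rw [hi]
    simp at hj ⊢
    omega
  | succ d ih =>
    intro i vi vj hi hj h1 h2
    by_cases hv : vi = v
    · exact ⟨i, le_refl _, by omega, by rw [hi, hv]⟩
    have hlen : i + d + 1 < l.length := by
      have := (List.getElem?_eq_some_iff.1 hj).1
      omega
    have hil : i + 1 < l.length := by omega
    have hstep := chain_step hc (show i + 1 < l.length by omega)
    have hgi : l[i]'(by omega) = vi := by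
      have := List.getElem?_eq_getElem (l := l) (i := i) (by omega)
      rw [this] at hi; exact Option.some_injective _ hi
    have hnext : l[i+1]? = some (l[i+1]'hil) := List.getElem?_eq_getElem _
    have hb : v ≤ l[i+1]'hil := by
      rcases hstep.1 with h | h
      · rw [hgi] at h; omega
      · rw [hgi] at h; omega
    obtain ⟨k, hk1, hk2, hk3⟩ := ih (i+1) hnext (by rw [show i+1+d = i+(d+1) by omega]; exact hj) hb h2
    exact ⟨k, by omega, by omega, hk3⟩


set_option maxHeartbeats 1000000 in
lemma main_aux (n : ℕ) (w : ℕ → ℕ → ℚ) (s0 t0 : ℕ) (C : Finset (ℕ × ℕ)) (L Rt : ℕ)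
    (hL : IsLeast {v | v ∈ VC C} L) (hR : IsGreatest {v | v ∈ VC C} Rt) :
    ∀ N (l : List ℕ), l.length ≤ N → Optimal ⟨pathAdj n, w, s0, t0, C⟩ l →
      l.idxOf L < l.idxOf Rt →
      ∃ π, Optimal ⟨pathAdj n, w, s0, t0, C⟩ π ∧ π.idxOf L < π.idxOf Rt ∧
        (π.take (π.idxOf L + 1)).foldr max 0 ∈ VC C ∪ {s0, t0} := by
  intro N
  induction N with
  | zero =>
    intro l hlen hopt _
    have hnil : l = [] := List.length_eq_zero_iff.1 (by omega)
    have := hopt.1.2.1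
    rw [hnil] at this
    simp at this
  | succ N ih =>
    intro l hlen hopt hlr
    obtain ⟨hfeas, hmin⟩ := hopt
    obtain ⟨⟨hne, hchain⟩, hhead, hlast, hsat⟩ := hfeas
    have hchain : l.Chain' (pathAdj n) := hchain
    set p := l.idxOf L with hp
    set r := l.idxOf Rt with hr
    have hLVC : L ∈ VC C := hL.1
    have hRVC : Rt ∈ VC C := hR.1
    -- Rt occurs in l
    have hRtmem : Rt ∈ l := by
      have := hRVC
      rw [VC, Finset.mem_union] at this
      rcases this with h | h
      · obtain ⟨req, hreq, hfst⟩ := Finset.mem_image.1 h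
        obtain ⟨i, j, _, hi, _⟩ := hsat req hreq
        rw [hfst] at hi
        exact List.mem_iff_getElem?.2 ⟨i, hi⟩
      · obtain ⟨req, hreq, hsnd⟩ := Finset.mem_image.1 h
        obtain ⟨i, j, _, _, hj⟩ := hsat req hreq
        rw [hsnd] at hj
        exact List.mem_iff_getElem?.2 ⟨j, hj⟩
    have hrlen : r < l.length := List.idxOf_lt_length_iff.2 hRtmem
    have hplen : p < l.length := lt_trans hlr hrlen
    have hLl : l[p]? = some L := by
      rw [List.getElem?_eq_some_iff]
      exact ⟨hplen, List.getElem_idxOf hplen⟩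
    have hRl : l[r]? = some Rt := by
      rw [List.getElem?_eq_some_iff]
      exact ⟨hrlen, List.getElem_idxOf hrlen⟩
    have h0 : l[0]? = some s0 := by rw [← List.head?_eq_getElem?]; exact hhead
    -- s0 ≥ 1
    have hlen2 : 2 ≤ l.length := by omega
    have hs01 : 1 ≤ s0 := by
      have hstep := chain_step hchain (show 0 + 1 < l.length by omega)
      have : l[0]'(by omega) = s0 := by
        have := List.getElem?_eq_getElem (l := l) (i := 0) (by omega)
        rw [this] at h0; exact Option.some_injective _ h0
      rw [this] at hstep
      exact hstep.2.1
    -- the prefix and its max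
    set m := ((l.take (p+1)).foldr max 0) with hm
    have hs0P : s0 ∈ l.take (p+1) := by
      refine List.mem_iff_getElem?.2 ⟨0, ?_⟩
      rw [List.getElem?_take, if_pos (by omega)]; exact h0
    have hLP : L ∈ l.take (p+1) := by
      refine List.mem_iff_getElem?.2 ⟨p, ?_⟩
      rw [List.getElem?_take, if_pos (by omega)]; exact hLl
    have hs0m : s0 ≤ m := le_foldr_max hs0P
    have hLm : L ≤ m := le_foldr_max hLP
    by_cases hmS : m ∈ VC C ∪ ({s0, t0} : Finset ℕ)
    · exact ⟨l, ⟨⟨⟨hne, hchain⟩, hhead, hlast, hsat⟩, hmin⟩, hlr, hmS⟩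
    -- recursive branch
    set S := VC C ∪ ({s0, t0} : Finset ℕ) with hS
    have hs0S : s0 ∈ S := by simp [hS]
    have hLS : L ∈ S := Finset.mem_union_left _ hLVC
    have hRtS : Rt ∈ S := Finset.mem_union_left _ hRVC
    have hs0mlt : s0 < m := lt_of_le_of_ne hs0m (fun h => hmS (h ▸ hs0S))
    have hLmlt : L < m := lt_of_le_of_ne hLm (fun h => hmS (h ▸ hLS))
    have hmP : m ∈ l.take (p+1) := by
      rcases foldr_max_mem (l.take (p+1)) with h | h
      · omega
      · exact h
    obtain ⟨jm, hjmk0⟩ := List.mem_iff_getElem?.1 hmP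
    rw [List.getElem?_take] at hjmk0
    have hjmk2 : jm < p + 1 ∧ l[jm]? = some m := by
      by_cases h : jm < p + 1
      · rw [if_pos h] at hjmk0; exact ⟨h, hjmk0⟩
      · rw [if_neg h] at hjmk0; simp at hjmk0
    obtain ⟨hjmp, hjmk⟩ := hjmk2
    -- m' : the largest element of S below m
    have hLT : L ∈ S.filter (fun v => v < m) := Finset.mem_filter.2 ⟨hLS, hLmlt⟩
    set m' := (S.filter (fun v => v < m)).max' ⟨L, hLT⟩ with hm'
    have hm'S : m' ∈ S := (Finset.mem_filter.1 ((S.filter (fun v => v < m)).max'_mem ⟨L, hLT⟩)).1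
    have hm'm : m' < m := (Finset.mem_filter.1 ((S.filter (fun v => v < m)).max'_mem ⟨L, hLT⟩)).2
    have hmaxS : ∀ v ∈ S, v < m → v ≤ m' := by
      intro v hv hvm
      apply Finset.le_max'
      exact Finset.mem_filter.2 ⟨hv, hvm⟩
    have hs0m' : s0 ≤ m' := hmaxS s0 hs0S hs0mlt
    have hLm' : L ≤ m' := hmaxS L hLS hLmlt
    -- find a
    have hAex : ∃ a, l[a]? = some m' ∧ a < jm ∧ ∀ k, k < jm → l[k]? = some m' → k ≤ a := by
      obtain ⟨a0, _, ha0jm, ha0⟩ := ivt_up hchain m' jm 0 h0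
        (by simpa using hjmk) hs0m' (le_of_lt hm'm)
      rw [Nat.zero_add] at ha0jm
      have ha0jm' : a0 < jm := by
        rcases lt_or_eq_of_le ha0jm with h | h
        · exact h
        · rw [h, hjmk] at ha0; simp at ha0; omega
      have hAne : a0 ∈ (Finset.range jm).filter (fun k => l[k]? = some m') :=
        Finset.mem_filter.2 ⟨Finset.mem_range.2 ha0jm', ha0⟩
      have haMem := ((Finset.range jm).filter (fun k => l[k]? = some m')).max'_mem ⟨a0, hAne⟩
      refine ⟨_, (Finset.mem_filter.1 haMem).2,
        Finset.mem_range.1 (Finset.mem_filter.1 haMem).1, ?_⟩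
      intro k hk1 hk2
      apply Finset.le_max'
      exact Finset.mem_filter.2 ⟨Finset.mem_range.2 hk1, hk2⟩
    obtain ⟨a, ha, hajm, hamax⟩ := hAex
    -- L < m' and Rt ≠ m'
    have hLm'' : L < m' := by
      rcases lt_or_eq_of_le hLm' with h | h
      · exact h
      · exfalso
        have := indexOf_le (h ▸ ha)
        omega
    have hRtm' : Rt ≠ m' := by
      intro h
      have := indexOf_le (h ▸ ha)
      omega
    -- find b
    have hBex : ∃ b, l[b]? = some m' ∧ jm ≤ b ∧ b ≤ p ∧
        ∀ k, jm ≤ k → k ≤ p → l[k]? = some m' → b ≤ k := by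
      obtain ⟨b0, hb0jm, hb0p, hb0⟩ := ivt_down hchain m' (p - jm) jm hjmk
        (by rw [show jm + (p - jm) = p by omega]; exact hLl) (le_of_lt hm'm) hLm'
      rw [show jm + (p - jm) = p by omega] at hb0p
      have hb0Mem : b0 ∈ (Finset.Icc jm p).filter (fun k => l[k]? = some m') :=
        Finset.mem_filter.2 ⟨Finset.mem_Icc.2 ⟨hb0jm, hb0p⟩, hb0⟩
      have hbMem := ((Finset.Icc jm p).filter (fun k => l[k]? = some m')).min'_mem ⟨b0, hb0Mem⟩
      have hbIcc := Finset.mem_Icc.1 (Finset.mem_filter.1 hbMem).1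
      refine ⟨_, (Finset.mem_filter.1 hbMem).2, hbIcc.1, hbIcc.2, ?_⟩
      intro k hk1 hk2 hk3
      apply Finset.min'_le
      exact Finset.mem_filter.2 ⟨Finset.mem_Icc.2 ⟨hk1, hk2⟩, hk3⟩
    obtain ⟨b, hb, hjmb0, hbp0, hbmin⟩ := hBex
    have hjmb : jm < b := by
      rcases lt_or_eq_of_le hjmb0 with h | h
      · exact h
      · exfalso; rw [← h, hjmk] at hb; simp at hb; omega
    have hbp : b < p := by
      rcases lt_or_eq_of_le hbp0 with h | h
      · exact h
      · exfalso; rw [h, hLl] at hb; simp at hb; omega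
    have hab : a < b := by omega
    -- middle values
    have hmid : ∀ k v, a < k → k < b → l[k]? = some v → m' < v ∧ v ≤ m := by
      intro k v hk1 hk2 hkv
      constructor
      · by_contra hcon
        push_neg at hcon
        rcases lt_trichotomy k jm with hk | hk | hk
        · obtain ⟨k', hk'1, hk'2, hk'3⟩ := ivt_up hchain m' (jm - k) k hkv
            (by rw [show k + (jm - k) = jm by omega]; exact hjmk) hcon (le_of_lt hm'm)
          rw [show k + (jm - k) = jm by omega] at hk'2
          have hk'jm : k' < jm := by
            rcases lt_or_eq_of_le hk'2 with h | h
            · exact h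
            · exfalso; rw [h, hjmk] at hk'3; simp at hk'3; omega
          have := hamax k' hk'jm hk'3
          omega
        · rw [hk, hjmk] at hkv; simp at hkv; omega
        · obtain ⟨k', hk'1, hk'2, hk'3⟩ := ivt_down hchain m' (k - jm) jm hjmk
            (by rw [show jm + (k - jm) = k by omega]; exact hkv) (le_of_lt hm'm) hcon
          rw [show jm + (k - jm) = k by omega] at hk'2
          have := hbmin k' hk'1 (by omega) hk'3
          omega
      · refine le_foldr_max (List.mem_iff_getElem?.2 ⟨k, ?_⟩)
        rw [List.getElem?_take, if_pos (by omega)]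
        exact hkv
    -- decomposition
    have halen : a < l.length := by omega
    have hblen : b < l.length := by omega
    have hga : l[a]'halen = m' := by
      have := List.getElem?_eq_getElem (l := l) (i := a) halen
      rw [this] at ha; exact Option.some_injective _ ha
    have hgb : l[b]'hblen = m' := by
      have := List.getElem?_eq_getElem (l := l) (i := b) hblen
      rw [this] at hb; exact Option.some_injective _ hb
    set X := l.take a with hX
    set Y := (l.drop (a+1)).take (b - a - 1) with hY
    set Z := l.drop (b+1) with hZ
    have hdecomp : l = X ++ m' :: (Y ++ m' :: Z) := by
      have t2 : l.drop (a+1) = Y ++ l.drop b := by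
        conv_lhs => rw [← List.take_append_drop (b - a - 1) (l.drop (a+1))]
        rw [List.drop_drop, show a + 1 + (b - a - 1) = b by omega, ← hY]
      have t1 : l.drop a = m' :: (Y ++ m' :: Z) := by
        rw [← List.getElem_cons_drop halen, hga, t2,
          ← List.getElem_cons_drop hblen, hgb]
      conv_lhs => rw [← List.take_append_drop a l, t1]
    have hXlen : X.length = a := by
      rw [hX, List.length_take]; omega
    have hYlen : Y.length = b - a - 1 := by
      rw [hY, List.length_take, List.length_drop]; omega
    -- Y avoids S
    have hYget : ∀ v ∈ Y, ∃ k, a < k ∧ k < b ∧ l[k]? = some v := by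
      intro v hv
      obtain ⟨k, hk⟩ := List.mem_iff_getElem?.1 hv
      rw [hY, List.getElem?_take] at hk
      by_cases hkb : k < b - a - 1
      · rw [if_pos hkb, List.getElem?_drop] at hk
        exact ⟨a + 1 + k, by omega, by omega, hk⟩
      · rw [if_neg hkb] at hk; simp at hk
    have hYnotS : ∀ v ∈ Y, v ∉ S := by
      intro v hv hvS
      obtain ⟨k, hk1, hk2, hk3⟩ := hYget v hv
      obtain ⟨h1, h2⟩ := hmid k v hk1 hk2 hk3
      have hvm : v < m := lt_of_le_of_ne h2 (fun h => hmS (h ▸ hvS))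
      have := hmaxS v hvS hvm
      omega
    -- the two modified rides
    have hfeas2 : Feasible ⟨pathAdj n, w, s0, t0, C⟩ (X ++ m' :: Z) := by
      refine ⟨⟨by simp, chain'_remove (hdecomp ▸ hchain)⟩, ?_, ?_, ?_⟩
      · rw [hdecomp] at hhead
        rw [List.head?_append] at hhead ⊢
        cases hXh : X.head? with
        | none => rw [hXh] at hhead; simpa using hhead
        | some xh => rw [hXh] at hhead; simpa using hhead
      · rw [hdecomp] at hlast
        rw [show X ++ m' :: (Y ++ m' :: Z) = (X ++ m' :: Y) ++ (m' :: Z) by simp] at hlast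
        rw [List.getLast?_append] at hlast ⊢
        cases hZl : (m' :: Z).getLast? with
        | none => exfalso; have := List.getLast?_isSome (l := m' :: Z); simp [hZl] at this
        | some zl => rw [hZl] at hlast; simpa using hlast
      · intro req hreq
        have h1S : req.1 ∈ S := Finset.mem_union_left _
          (Finset.mem_union_left _ (Finset.mem_image.2 ⟨req, hreq, rfl⟩))
        have h2S : req.2 ∈ S := Finset.mem_union_left _
          (Finset.mem_union_right _ (Finset.mem_image.2 ⟨req, hreq, rfl⟩))
        refine satisfies_remove (fun h => hYnotS _ h h1S) (fun h => hYnotS _ h h2S) ?_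
        rw [← hdecomp]
        exact hsat req hreq
    have hfeas3 : Feasible ⟨pathAdj n, w, s0, t0, C⟩ (X ++ m' :: (Y ++ m' :: (Y ++ m' :: Z))) := by
      refine ⟨⟨by simp, chain'_dup (hdecomp ▸ hchain)⟩, ?_, ?_, ?_⟩
      · rw [hdecomp] at hhead
        rw [List.head?_append] at hhead ⊢
        cases hXh : X.head? with
        | none => rw [hXh] at hhead; simpa using hhead
        | some xh => rw [hXh] at hhead; simpa using hhead
      · rw [hdecomp] at hlast
        rw [show X ++ m' :: (Y ++ m' :: Z) = (X ++ m' :: Y) ++ (m' :: Z) by simp] at hlast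
        rw [show X ++ m' :: (Y ++ m' :: (Y ++ m' :: Z))
            = (X ++ m' :: Y ++ m' :: Y) ++ (m' :: Z) by simp, List.getLast?_append] at *
        cases hZl : (m' :: Z).getLast? with
        | none => exfalso; have := List.getLast?_isSome (l := m' :: Z); simp [hZl] at this
        | some zl => rw [hZl] at hlast; simpa using hlast
      · intro req hreq
        refine satisfies_sublist sublist_dup ?_
        rw [← hdecomp]
        exact hsat req hreq
    -- costs
    have hcost1 : cost w l
        = cost w (X ++ [m']) + (cost w ((m' :: Y) ++ [m']) + cost w (m' :: Z)) := by
      rw [hdecomp, cost_append_cons w X m' (Y ++ m' :: Z),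
        show m' :: (Y ++ m' :: Z) = (m' :: Y) ++ m' :: Z by simp,
        cost_append_cons w (m' :: Y) m' Z]
    have hcost2 : cost w (X ++ m' :: Z) = cost w (X ++ [m']) + cost w (m' :: Z) :=
      cost_append_cons w X m' Z
    have hcost3 : cost w (X ++ m' :: (Y ++ m' :: (Y ++ m' :: Z)))
        = cost w (X ++ [m']) + (cost w ((m' :: Y) ++ [m'])
          + (cost w ((m' :: Y) ++ [m']) + cost w (m' :: Z))) := by
      rw [cost_append_cons w X m' (Y ++ m' :: (Y ++ m' :: Z)),
        show m' :: (Y ++ m' :: (Y ++ m' :: Z)) = (m' :: Y) ++ m' :: (Y ++ m' :: Z) by simp,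
        cost_append_cons w (m' :: Y) m' (Y ++ m' :: Z),
        show m' :: (Y ++ m' :: Z) = (m' :: Y) ++ m' :: Z by simp,
        cost_append_cons w (m' :: Y) m' Z]
    have hle3 : cost w l ≤ cost w (X ++ m' :: (Y ++ m' :: (Y ++ m' :: Z))) := hmin _ hfeas3
    have hle2 : cost w (X ++ m' :: Z) ≤ cost w l := by
      rw [hcost1, hcost2] at *
      rw [hcost3] at hle3
      linarith
    have hopt2 : Optimal ⟨pathAdj n, w, s0, t0, C⟩ (X ++ m' :: Z) :=
      ⟨hfeas2, fun q hq => le_trans hle2 (hmin q hq)⟩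
    -- indexOf facts
    have hassoc : X ++ m' :: (Y ++ m' :: Z) = (X ++ [m']) ++ ((Y ++ [m']) ++ Z) := by simp
    have hassoc2 : X ++ m' :: Z = (X ++ [m']) ++ Z := by simp
    have hnotmemX : ∀ v : ℕ, l.idxOf v = p ∨ l.idxOf v = r → v ≠ m' → v ∉ X ++ [m'] := by
      intro v hv hvm'
      simp only [List.mem_append, List.mem_singleton]
      push_neg
      refine ⟨?_, hvm'⟩
      intro hvX
      obtain ⟨k, hk⟩ := List.mem_iff_getElem?.1 hvX
      rw [hX, List.getElem?_take] at hk
      by_cases hka : k < a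
      · rw [if_pos hka] at hk
        have := indexOf_le hk
        omega
      · rw [if_neg hka] at hk; simp at hk
    have hnotmemY : ∀ v : ℕ, v ∈ S → v ≠ m' → v ∉ Y ++ [m'] := by
      intro v hvS hvm'
      simp only [List.mem_append, List.mem_singleton]
      push_neg
      exact ⟨fun h => hYnotS v h hvS, hvm'⟩
    have hLX := hnotmemX L (Or.inl rfl) (by omega)
    have hLY := hnotmemY L hLS (by omega)
    have hRX := hnotmemX Rt (Or.inr rfl) hRtm'
    have hRY := hnotmemY Rt hRtS hRtm'
    have hlenXu : (X ++ [m']).length = a + 1 := by simp [hXlen]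
    have hlenYu : (Y ++ [m']).length = b - a := by simp [hYlen]; omega
    have hidxL : p = (a + 1) + ((b - a) + Z.idxOf L) := by
      conv_lhs => rw [hp, hdecomp, hassoc]
      rw [List.idxOf_append_of_notMem hLX, List.idxOf_append_of_notMem hLY,
        hlenXu, hlenYu]
    have hidxR : r = (a + 1) + ((b - a) + Z.idxOf Rt) := by
      conv_lhs => rw [hr, hdecomp, hassoc]
      rw [List.idxOf_append_of_notMem hRX, List.idxOf_append_of_notMem hRY,
        hlenXu, hlenYu]
    have hidx2 : (X ++ m' :: Z).idxOf L < (X ++ m' :: Z).idxOf Rt := by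
      rw [hassoc2, List.idxOf_append_of_notMem hLX, List.idxOf_append_of_notMem hRX]
      omega
    -- lengths
    have hlen2' : (X ++ m' :: Z).length ≤ N := by
      have h1 : l.length = X.length + (1 + (Y.length + (1 + Z.length))) := by
        rw [hdecomp]; simp only [List.length_append, List.length_cons]; omega
      have h2 : (X ++ m' :: Z).length = X.length + (1 + Z.length) := by
        simp only [List.length_append, List.length_cons]; omega
      omega
    exact ih (X ++ m' :: Z) hlen2' hopt2 hidx2


/-- in the inner case, if some optimal ride reaches `left(R)` before
`right(R)`, then there is such an optimal ride `π` whose value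
`rm(π) = max_{i ≤ leftIdx(π)} π_i` belongs to `V_C ∪ {s₀,t₀}`. -/
theorem exists_optimal_rm_in_VC (n : ℕ) (w : ℕ → ℕ → ℚ) (s0 t0 : ℕ)
    (C : Finset (ℕ × ℕ)) (L Rt : ℕ)
    (hL : IsLeast {v | v ∈ VC C} L) (hR : IsGreatest {v | v ∈ VC C} Rt)
    (hinner : (L < s0 ∧ s0 < Rt) ∨ (L < t0 ∧ t0 < Rt))
    (π' : List ℕ) (hopt : Optimal ⟨pathAdj n, w, s0, t0, C⟩ π')
    (hlr : π'.idxOf L < π'.idxOf Rt) :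
    ∃ π, Optimal ⟨pathAdj n, w, s0, t0, C⟩ π ∧
      π.idxOf L < π.idxOf Rt ∧
      (π.take (π.idxOf L + 1)).foldr max 0 ∈ VC C ∪ {s0, t0} := by
  exact main_aux n w s0 t0 C L Rt hL hR π'.length π' le_rfl hopt hlr

end RideSharing
end
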